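/- arXiv:1110.3040 — 3 statements merged into one kernel-verified Lean document; each statement's English description precedes it below -/
import Mathlib

section
/- Every indecomposable representation of the linearly oriented quiver A_n is isomorphic to an interval representation E^{ij} for some 1 ≤ i ≤ j ≤ n. -/
open Classical

/-- A representation of a quiver (given by vertex type `ι`, arrow type `E`,
and source/target maps `s t : E → ι`) over a field `K`: a finite-dimensional
`K`-vector space at each vertex and a linear map along each arrow. -/
structure QRep (K : Type) [Field K] {ι : Type} {E : Type} (s t : E → ι) : Type 1 where
  V : ι → Type
  [addV : ∀ i, AddCommGroup (V i)]
  [modV : ∀ i, Module K (V i)]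
  [fdV : ∀ i, FiniteDimensional K (V i)]
  f : ∀ e : E, V (s e) →ₗ[K] V (t e)

attribute [instance] QRep.addV QRep.modV QRep.fdV

namespace QRep

variable {K : Type} [Field K] {ι E : Type} {s t : E → ι}

/-- A morphism of representations: linear maps at each vertex commuting with the arrow maps. -/
structure Hom (X Y : QRep K s t) : Type where
  φ : ∀ i, X.V i →ₗ[K] Y.V i
  comm : ∀ e, (Y.f e).comp (φ (s e)) = (φ (t e)).comp (X.f e)

def Hom.Surjective {X Y : QRep K s t} (f : Hom X Y) : Prop := ∀ i, Function.Surjective (f.φ i)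

def Hom.Injective {X Y : QRep K s t} (f : Hom X Y) : Prop := ∀ i, Function.Injective (f.φ i)

/-- Two representations are isomorphic if there is a morphism bijective at every vertex. -/
def Iso (X Y : QRep K s t) : Prop := ∃ f : Hom X Y, ∀ i, Function.Bijective (f.φ i)

/-- Direct sum of two representations, taken vertexwise. -/
def dsum (X Y : QRep K s t) : QRep K s t where
  V i := X.V i × Y.V i
  f e := (X.f e).prodMap (Y.f e)

instance : Module.Finite K PUnit :=
  Module.Finite.of_surjective (0 : K →ₗ[K] PUnit) (fun x => ⟨0, Subsingleton.elim _ _⟩)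

/-- The zero representation. -/
def zero : QRep K s t where
  V _ := PUnit
  f _ := 0

/-- A representation is zero if all its vector spaces are zero. -/
def IsZero (X : QRep K s t) : Prop := ∀ i, ∀ x : X.V i, x = 0

/-- Indecomposable: nonzero, and not isomorphic to a direct sum of two nonzero representations. -/
def Indec (X : QRep K s t) : Prop :=
  ¬ X.IsZero ∧ ∀ A B : QRep K s t, Iso X (A.dsum B) → A.IsZero ∨ B.IsZero

/-- Direct sum of a finite list of representations. -/
noncomputable def dsumList : List (QRep K s t) → QRep K s t
  | [] => zero
  | X :: L => X.dsum (dsumList L)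

/-- An extension `Y` of `Z` by `X`: an injective morphism `X → Y` and a surjective
morphism `Y → Z` whose vertexwise kernel is the image of `X`. -/
structure Extension (X Y Z : QRep K s t) : Type where
  incl : Hom X Y
  proj : Hom Y Z
  inj : ∀ i, Function.Injective (incl.φ i)
  surj : ∀ i, Function.Surjective (proj.φ i)
  exact : ∀ i, LinearMap.ker (proj.φ i) = LinearMap.range (incl.φ i)

/-- An extension is trivial (split) if there is a morphism `Y → X` restricting to the identity on `X`. -/
def Extension.Trivial {X Y Z : QRep K s t} (E : Extension X Y Z) : Prop :=
  ∃ r : Hom Y X, ∀ i x, r.φ i (E.incl.φ i x) = x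

/-- A subrepresentation of `Y`: a subspace at each vertex, stable under the arrow maps. -/
structure Sub (Y : QRep K s t) : Type where
  p : ∀ i, Submodule K (Y.V i)
  stable : ∀ e, ∀ x ∈ p (s e), Y.f e x ∈ p (t e)

def Sub.toRep {Y : QRep K s t} (S : Sub Y) : QRep K s t where
  V i := S.p i
  f e := (Y.f e).restrict (S.stable e)

/-- The quotient representation `Y/X`. -/
def Sub.quot {Y : QRep K s t} (S : Sub Y) : QRep K s t where
  V i := Y.V i ⧸ S.p i
  f e := Submodule.mapQ (S.p (s e)) (S.p (t e)) (Y.f e) (fun x hx => S.stable e x hx)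

/-- The inclusion morphism of a subrepresentation. -/
def Sub.incl {Y : QRep K s t} (S : Sub Y) : Hom S.toRep Y where
  φ i := (S.p i).subtype
  comm e := by ext x; rfl

/-- The quotient morphism onto the quotient representation. -/
def Sub.mkQ {Y : QRep K s t} (S : Sub Y) : Hom Y S.quot where
  φ i := (S.p i).mkQ
  comm e := by ext x; first | rfl | exact Submodule.mapQ_apply _ _ _ _

/-- The space of morphisms between two representations, as a subspace of the product of Hom spaces. -/
def HomSpace (X Y : QRep K s t) : Submodule K (∀ i, X.V i →ₗ[K] Y.V i) where
  carrier := {φ | ∀ e, (Y.f e).comp (φ (s e)) = (φ (t e)).comp (X.f e)}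
  add_mem' := by
    intro a b ha hb e
    simp only [Set.mem_setOf_eq] at ha hb
    simp [LinearMap.comp_add, LinearMap.add_comp, ha e, hb e]
  zero_mem' := by intro e; simp
  smul_mem' := by
    intro c a ha e
    simp only [Set.mem_setOf_eq] at ha
    simp [LinearMap.comp_smul, LinearMap.smul_comp, ha e]

end QRep
/-- The source of the `e`-th arrow of the linearly oriented quiver `Aₙ`
(vertices `0,…,n-1`, arrows `e → e+1` for `0 ≤ e < n-1`; 0-based indexing). -/
def ASrc (n : ℕ) (e : Fin (n - 1)) : Fin n := ⟨e.val, by have := e.isLt; omega⟩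

/-- The target of the `e`-th arrow of `Aₙ`. -/
def ATgt (n : ℕ) (e : Fin (n - 1)) : Fin n := ⟨e.val + 1, by have := e.isLt; omega⟩

/-- Representations of the linearly oriented quiver `Aₙ`. -/
abbrev ARep (K : Type) [Field K] (n : ℕ) := QRep K (ASrc n) (ATgt n)

/-- The canonical map from `M` to a submodule `T`: the identity if `T = ⊤`, zero otherwise. -/
noncomputable def toSub {K M : Type} [Field K] [AddCommGroup M] [Module K M]
    (T : Submodule K M) : M →ₗ[K] T :=
  if h : T = ⊤ then LinearMap.codRestrict T LinearMap.id (fun x => by simp [h]) else 0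

/-- The vertex spaces of the interval representation `E^{ij}`: `K` for `i ≤ p ≤ j`, zero otherwise. -/
def ESub (K : Type) [Field K] (n i j : ℕ) (p : Fin n) : Submodule K K :=
  if i ≤ p.val ∧ p.val ≤ j then ⊤ else ⊥

/-- The interval representation `E^{ij}` of `Aₙ` (0-based): one-dimensional spaces at
vertices `i,…,j`, identity maps between consecutive ones, zero elsewhere. -/
noncomputable def Eij (K : Type) [Field K] (n i j : ℕ) : ARep K n where
  V p := ESub K n i j p
  f e := (toSub (ESub K n i j (ATgt n e))).comp (ESub K n i j (ASrc n e)).subtype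

/-- Direct sum of interval representations indexed by a list of pairs. -/
noncomputable def intervalSum (K : Type) [Field K] (n : ℕ) (L : List (ℕ × ℕ)) : ARep K n :=
  QRep.dsumList (L.map fun pr => Eij K n pr.1 pr.2)



section Phi
variable {K : Type} [Field K] {n : ℕ} (X : ARep K n)

/-- The global shift operator on the total space of a representation of `Aₙ`. -/
noncomputable def Phi : (∀ p : Fin n, X.V p) →ₗ[K] (∀ p : Fin n, X.V p) :=
  ∑ e : Fin (n-1),
    (LinearMap.single K X.V (ATgt n e)).comp ((X.f e).comp (LinearMap.proj (ASrc n e)))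

variable {X}

lemma phi_single (q : Fin n) (h : q.val + 1 < n) (x : X.V q) :
    Phi X (LinearMap.single K X.V q x)
      = LinearMap.single K X.V ⟨q.val+1, h⟩ (X.f ⟨q.val, by omega⟩ x) := by
  rw [Phi, LinearMap.sum_apply]
  rw [Finset.sum_eq_single (⟨q.val, by omega⟩ : Fin (n-1))]
  · show LinearMap.single K X.V (⟨q.val+1, h⟩ : Fin n)
      ((X.f ⟨q.val, by omega⟩) ((LinearMap.single K X.V q x) q)) = _
    simp [LinearMap.single_apply]
  · intro e _ he
    have hne : ASrc n e ≠ q := by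
      intro hh
      exact he (Fin.ext (show e.val = q.val from congrArg Fin.val hh))
    simp only [LinearMap.comp_apply, LinearMap.proj_apply, LinearMap.single_apply]
    rw [Pi.single_eq_of_ne hne]
    simp
  · intro h'
    exact absurd (Finset.mem_univ _) h'

lemma phi_single_last (q : Fin n) (h : n ≤ q.val + 1) (x : X.V q) :
    Phi X (LinearMap.single K X.V q x) = 0 := by
  rw [Phi, LinearMap.sum_apply]
  apply Finset.sum_eq_zero
  intro e _
  have hne : ASrc n e ≠ q := by
    intro hh
    have := congrArg Fin.val hh
    simp only [ASrc] at this
    have := e.isLt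
    omega
  simp only [LinearMap.comp_apply, LinearMap.proj_apply, LinearMap.single_apply]
  rw [Pi.single_eq_of_ne hne]
  simp

lemma phi_pow_single_zero : ∀ (d : ℕ) (q : Fin n) (x : X.V q), n ≤ q.val + d →
    ((Phi X)^d) (LinearMap.single K X.V q x) = 0 := by
  intro d
  induction d with
  | zero => intro q x h; exact absurd q.isLt (by omega)
  | succ d ih =>
    intro q x h
    rw [pow_succ, Module.End.mul_apply]
    by_cases hq : q.val + 1 < n
    · rw [phi_single q hq]
      exact ih _ _ (by simp; omega)
    · rw [phi_single_last q (by omega)]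
      simp

lemma phi_pow_single : ∀ (d : ℕ) (q r : Fin n) (x : X.V q), r.val = q.val + d →
    ∃ y : X.V r, ((Phi X)^d) (LinearMap.single K X.V q x) = LinearMap.single K X.V r y := by
  intro d
  induction d with
  | zero =>
    intro q r x h
    have : r = q := Fin.ext (by omega)
    subst this
    exact ⟨x, by rw [pow_zero, Module.End.one_apply]⟩
  | succ d ih =>
    intro q r x h
    have hq : q.val + 1 < n := by have := r.isLt; omega
    rw [pow_succ, Module.End.mul_apply, phi_single q hq]
    exact ih ⟨q.val+1, hq⟩ r _ (by simp; omega)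

lemma phi_pow_single_eq (d : ℕ) (q r : Fin n) (x : X.V q) (h : r.val = q.val + d) :
    ((Phi X)^d) (LinearMap.single K X.V q x)
      = LinearMap.single K X.V r (((Phi X)^d) (LinearMap.single K X.V q x) r) := by
  obtain ⟨y, hy⟩ := phi_pow_single d q r x h
  rw [hy]; congr 1; simp [LinearMap.single_apply]

end Phi

lemma exists_functional {K V : Type} [Field K] [AddCommGroup V] [Module K V]
    (N : Submodule K V) (v : V) (hv : v ∉ N) :
    ∃ lam : V →ₗ[K] K, lam v = 1 ∧ ∀ u ∈ N, lam u = 0 := by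
  set vb : V ⧸ N := N.mkQ v with hvb_def
  have hvb : vb ≠ 0 := by
    simp only [hvb_def, Submodule.mkQ_apply, ne_eq, Submodule.Quotient.mk_eq_zero]
    exact hv
  set e := LinearEquiv.toSpanNonzeroSingleton K (V ⧸ N) vb hvb with he_def
  obtain ⟨C, hC⟩ := Submodule.exists_isCompl (Submodule.span K {vb})
  set pr := Submodule.linearProjOfIsCompl _ C hC with hpr_def
  refine ⟨(e.symm.toLinearMap.comp pr).comp N.mkQ, ?_, ?_⟩
  · show e.symm (pr vb) = 1
    have h1 : pr vb = ⟨vb, Submodule.mem_span_singleton_self vb⟩ := by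
      have := Submodule.linearProjOfIsCompl_apply_left hC
        (⟨vb, Submodule.mem_span_singleton_self vb⟩ : Submodule.span K {vb})
      exact this
    rw [h1, LinearEquiv.symm_apply_eq]
    ext
    simp [he_def, LinearEquiv.toSpanNonzeroSingleton]
  · intro u hu
    show e.symm (pr (N.mkQ u)) = 0
    have : N.mkQ u = 0 := by simp [Submodule.Quotient.mk_eq_zero, hu]
    rw [this]
    simp

section WMu
variable {K : Type} [Field K] {n : ℕ} (X : ARep K n)

/-- The chain vector at `p` generated by `vi` at `iF`. -/
noncomputable def wvec (iF : Fin n) (vi : X.V iF) (p : Fin n) : X.V p :=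
  (((Phi X)^(p.val - iF.val)) (LinearMap.single K X.V iF vi)) p

/-- The functional at `p` obtained by pushing to `jF` and applying `lam`. -/
noncomputable def muMap (jF : Fin n) (lam : X.V jF →ₗ[K] K) (p : Fin n) :
    X.V p →ₗ[K] K :=
  ((lam.comp (LinearMap.proj jF)).comp ((Phi X)^(jF.val - p.val))).comp
    (LinearMap.single K X.V p)

variable {X}
variable {iF jF : Fin n} {b : ℕ} {vi : X.V iF} {vj : X.V jF} {lam : X.V jF →ₗ[K] K}

lemma w_single {p : Fin n} (hp : iF.val ≤ p.val) :
    ((Phi X)^(p.val - iF.val)) (LinearMap.single K X.V iF vi)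
      = LinearMap.single K X.V p (wvec X iF vi p) :=
  phi_pow_single_eq _ _ _ _ (by omega)

lemma w_lo {p : Fin n} (hp : p.val < iF.val) : wvec X iF vi p = 0 := by
  unfold wvec
  have : p.val - iF.val = 0 := by omega
  rw [this, pow_zero, Module.End.one_apply, LinearMap.single_apply,
    Pi.single_eq_of_ne (by intro hh; subst hh; omega)]

lemma w_step {p : Fin n} (h1 : p.val + 1 < n) (hp : iF.val ≤ p.val) :
    X.f ⟨p.val, by omega⟩ (wvec X iF vi p) = wvec X iF vi ⟨p.val+1, h1⟩ := by
  have e1 : ((Phi X)^((⟨p.val+1, h1⟩ : Fin n).val - iF.val)) (LinearMap.single K X.V iF vi)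
      = LinearMap.single K X.V (⟨p.val+1, h1⟩ : Fin n) (X.f ⟨p.val, by omega⟩ (wvec X iF vi p)) := by
    have hexp : (⟨p.val+1, h1⟩ : Fin n).val - iF.val = (p.val - iF.val) + 1 := by simp; omega
    rw [hexp, pow_succ', Module.End.mul_apply, w_single hp, phi_single p h1]
  conv_rhs => unfold wvec
  rw [e1]
  exact (Pi.single_eq_same _ _).symm

lemma w_dead (hbirth : ((Phi X)^b) (LinearMap.single K X.V iF vi) = LinearMap.single K X.V jF vj)
    (hdead : Phi X (LinearMap.single K X.V jF vj) = 0) (c : ℕ) :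
    ((Phi X)^(c + (b+1))) (LinearMap.single K X.V iF vi) = 0 := by
  rw [pow_add, Module.End.mul_apply, pow_succ', Module.End.mul_apply, hbirth, hdead]
  simp

lemma w_hi (hb : iF.val + b = jF.val)
    (hbirth : ((Phi X)^b) (LinearMap.single K X.V iF vi) = LinearMap.single K X.V jF vj)
    (hdead : Phi X (LinearMap.single K X.V jF vj) = 0)
    {p : Fin n} (hp : jF.val < p.val) : wvec X iF vi p = 0 := by
  unfold wvec
  have hexp : p.val - iF.val = (p.val - iF.val - (b+1)) + (b+1) := by omega
  rw [hexp, w_dead hbirth hdead]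
  simp

lemma w_at_j (hb : iF.val + b = jF.val)
    (hbirth : ((Phi X)^b) (LinearMap.single K X.V iF vi) = LinearMap.single K X.V jF vj) :
    wvec X iF vi jF = vj := by
  unfold wvec
  have hexp : jF.val - iF.val = b := by omega
  rw [hexp, hbirth, LinearMap.single_apply, Pi.single_eq_same]

lemma mu_hi {p : Fin n} (hp : jF.val < p.val) (x : X.V p) : muMap X jF lam p x = 0 := by
  unfold muMap
  have : jF.val - p.val = 0 := by omega
  simp only [LinearMap.comp_apply, this, pow_zero, Module.End.one_apply,
    LinearMap.proj_apply, LinearMap.single_apply]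
  rw [Pi.single_eq_of_ne (by intro hh; subst hh; omega)]
  simp

lemma mu_step {p : Fin n} (h1 : p.val + 1 < n) (hp : p.val < jF.val) (x : X.V p) :
    muMap X jF lam p x = muMap X jF lam ⟨p.val+1, h1⟩ (X.f ⟨p.val, by omega⟩ x) := by
  unfold muMap
  simp only [LinearMap.comp_apply, LinearMap.proj_apply]
  have hexp : jF.val - p.val = (jF.val - (p.val+1)) + 1 := by omega
  rw [hexp, pow_succ, Module.End.mul_apply, phi_single p h1]
  rfl

lemma mu_w (hb : iF.val + b = jF.val) (hlam1 : lam vj = 1)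
    (hbirth : ((Phi X)^b) (LinearMap.single K X.V iF vi) = LinearMap.single K X.V jF vj)
    {p : Fin n} (hp1 : iF.val ≤ p.val) (hp2 : p.val ≤ jF.val) :
    muMap X jF lam p (wvec X iF vi p) = 1 := by
  unfold muMap
  simp only [LinearMap.comp_apply, LinearMap.proj_apply]
  rw [← w_single hp1, ← Module.End.mul_apply, ← pow_add]
  have hexp : jF.val - p.val + (p.val - iF.val) = b := by omega
  rw [hexp, hbirth, LinearMap.single_apply, Pi.single_eq_same, hlam1]

end WMu

section SplitMain
variable {K : Type} [Field K] {n : ℕ}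

/-- The subrepresentation spanned by the chain through `vi`. -/
noncomputable def wSub (X : ARep K n) (iF : Fin n) (vi : X.V iF) : QRep.Sub X where
  p := fun p => Submodule.span K {wvec X iF vi p}
  stable := by
    intro e x hx
    rw [Submodule.mem_span_singleton] at hx
    obtain ⟨c, rfl⟩ := hx
    rw [map_smul]
    apply Submodule.smul_mem
    rcases Nat.lt_or_ge (ASrc n e).val iF.val with h | h
    · rw [w_lo h]
      simp
    · have h1 : (ASrc n e).val + 1 < n := (ATgt n e).isLt
      rw [show X.f e (wvec X iF vi (ASrc n e)) = wvec X iF vi (ATgt n e) from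
        w_step h1 h]
      exact Submodule.mem_span_singleton_self _

variable {X : ARep K n}

lemma split_given_data (iF jF : Fin n) (b : ℕ) (hb : iF.val + b = jF.val)
    (vi : X.V iF) (vj : X.V jF)
    (hbirth : ((Phi X)^b) (LinearMap.single K X.V iF vi) = LinearMap.single K X.V jF vj)
    (hdead : Phi X (LinearMap.single K X.V jF vj) = 0)
    (lam : X.V jF →ₗ[K] K) (hlam1 : lam vj = 1)
    (hlam0 : ∀ p : Fin n, p.val < iF.val → ∀ x : X.V p, muMap X jF lam p x = 0) :
    ∃ Y : ARep K n, QRep.Iso X ((Eij K n iF.val jF.val).dsum Y) := by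
  have hwout : ∀ p : Fin n, ¬(iF.val ≤ p.val ∧ p.val ≤ jF.val) → wvec X iF vi p = 0 := by
    intro p hp
    rcases Nat.lt_or_ge p.val iF.val with h | h
    · exact w_lo h
    · exact w_hi hb hbirth hdead (by omega)
  have hmuout : ∀ p : Fin n, ¬(iF.val ≤ p.val ∧ p.val ≤ jF.val) →
      ∀ x, muMap X jF lam p x = 0 := by
    intro p hp x
    rcases Nat.lt_or_ge p.val iF.val with h | h
    · exact hlam0 p h x
    · exact mu_hi (by omega) x
  have hmem : ∀ p : Fin n, ∀ x : X.V p,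
      muMap X jF lam p x ∈ ESub K n iF.val jF.val p := by
    intro p x
    by_cases hc : iF.val ≤ p.val ∧ p.val ≤ jF.val
    · rw [ESub, if_pos hc]; trivial
    · rw [ESub, if_neg hc, Submodule.mem_bot]
      exact hmuout p hc x
  refine ⟨(wSub X iF vi).quot,
    ⟨{ φ := fun p => LinearMap.prod
        (LinearMap.codRestrict _ (muMap X jF lam p) (hmem p))
        (((wSub X iF vi).p p).mkQ)
       comm := ?_ }, ?_⟩⟩
  · intro e
    refine LinearMap.ext fun x => ?_
    refine Prod.ext ?_ ?_
    · show toSub (ESub K n iF.val jF.val (ATgt n e)) (muMap X jF lam (ASrc n e) x)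
        = ⟨muMap X jF lam (ATgt n e) (X.f e x), hmem _ _⟩
      by_cases hc : iF.val ≤ (ATgt n e).val ∧ (ATgt n e).val ≤ jF.val
      · have hTop : ESub K n iF.val jF.val (ATgt n e) = ⊤ := by
          rw [ESub]; exact if_pos hc
        rw [toSub, dif_pos hTop]
        apply Subtype.ext
        have h1 : (ATgt n e).val = (ASrc n e).val + 1 := rfl
        have hlt : (ASrc n e).val < jF.val := by omega
        show muMap X jF lam (ASrc n e) x = muMap X jF lam (ATgt n e) (X.f e x)
        exact mu_step (p := ASrc n e) (show (ASrc n e).val + 1 < n from (ATgt n e).isLt) hlt x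
      · have hBot : ESub K n iF.val jF.val (ATgt n e) = ⊥ := by
          rw [ESub]; exact if_neg hc
        rw [toSub, dif_neg (by rw [hBot]; exact bot_ne_top)]
        apply Subtype.ext
        show (0 : K) = muMap X jF lam (ATgt n e) (X.f e x)
        exact (hmuout _ hc _).symm
    · show Submodule.mapQ ((wSub X iF vi).p (ASrc n e)) ((wSub X iF vi).p (ATgt n e))
          (X.f e) (fun x hx => (wSub X iF vi).stable e x hx)
          (((wSub X iF vi).p (ASrc n e)).mkQ x)
        = ((wSub X iF vi).p (ATgt n e)).mkQ (X.f e x)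
      simp [Submodule.mapQ_apply]
  · intro p
    have hinj : Function.Injective
        ((LinearMap.prod
          (LinearMap.codRestrict _ (muMap X jF lam p) (hmem p))
          (((wSub X iF vi).p p).mkQ))) := by
      rw [← LinearMap.ker_eq_bot, Submodule.eq_bot_iff]
      intro x hx
      rw [LinearMap.mem_ker] at hx
      have hx1 := congrArg Prod.fst hx
      have h1 : muMap X jF lam p x = 0 := congrArg Subtype.val hx1
      have h2 : x ∈ (wSub X iF vi).p p := by
        have hx2 := congrArg Prod.snd hx
        simpa [Submodule.Quotient.mk_eq_zero] using hx2
      rw [show (wSub X iF vi).p p = Submodule.span K {wvec X iF vi p} from rfl,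
        Submodule.mem_span_singleton] at h2
      obtain ⟨c, rfl⟩ := h2
      by_cases hc : iF.val ≤ p.val ∧ p.val ≤ jF.val
      · rw [map_smul, mu_w hb hlam1 hbirth hc.1 hc.2] at h1
        simp only [smul_eq_mul, mul_one] at h1
        simp [h1]
      · rw [hwout p hc]
        simp
    refine ⟨hinj, ?_⟩
    have hfr : Module.finrank K (((Eij K n iF.val jF.val).dsum (wSub X iF vi).quot).V p)
        = Module.finrank K (X.V p) := by
      show Module.finrank K (↥(ESub K n iF.val jF.val p) × (X.V p ⧸ (wSub X iF vi).p p)) = _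
      rw [Module.finrank_prod]
      have h1 := Submodule.finrank_quotient_add_finrank ((wSub X iF vi).p p)
      have h2 : Module.finrank K (ESub K n iF.val jF.val p)
          = Module.finrank K ((wSub X iF vi).p p) := by
        by_cases hc : iF.val ≤ p.val ∧ p.val ≤ jF.val
        · have e1 : ESub K n iF.val jF.val p = ⊤ := by rw [ESub]; exact if_pos hc
          have hw0 : wvec X iF vi p ≠ 0 := by
            intro h0
            have hmw := mu_w (X := X) hb hlam1 hbirth hc.1 hc.2
            rw [h0, map_zero] at hmw
            exact zero_ne_one hmw
          rw [e1, finrank_top, Module.finrank_self,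
            show (wSub X iF vi).p p = Submodule.span K {wvec X iF vi p} from rfl,
            finrank_span_singleton hw0]
        · have e1 : ESub K n iF.val jF.val p = ⊥ := by rw [ESub]; exact if_neg hc
          rw [e1, finrank_bot,
            show (wSub X iF vi).p p = Submodule.span K {wvec X iF vi p} from rfl,
            hwout p hc, Submodule.span_zero_singleton, finrank_bot]
      omega
    have h3 := LinearMap.finrank_range_of_inj hinj
    rw [← LinearMap.range_eq_top]
    exact Submodule.eq_top_of_finrank_eq (h3.trans hfr.symm)

end SplitMain

section Assemble
variable {K : Type} [Field K] {n : ℕ} {X : ARep K n}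

lemma exists_dead (hnz : ¬ X.IsZero) :
    ∃ (jF : Fin n) (vj : X.V jF), vj ≠ 0 ∧ Phi X (LinearMap.single K X.V jF vj) = 0 := by
  classical
  simp only [QRep.IsZero, not_forall] at hnz
  obtain ⟨p0, x0, hx0⟩ := hnz
  set P : ℕ → Prop := fun d => ((Phi X)^d) (LinearMap.single K X.V p0 x0) ≠ 0 with hP
  have hP0 : P 0 := by
    simp only [hP, pow_zero, Module.End.one_apply]
    intro h
    apply hx0
    have := congrFun h p0
    simpa [LinearMap.single_apply] using this
  have hPd : P (Nat.findGreatest P n) := Nat.findGreatest_spec (Nat.zero_le n) hP0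
  set d := Nat.findGreatest P n with hd
  have hdn : d ≤ n := Nat.findGreatest_le n
  have hjn : p0.val + d < n := by
    by_contra h
    exact hPd (phi_pow_single_zero d p0 x0 (by omega))
  obtain ⟨vj, hvj⟩ := phi_pow_single d p0 ⟨p0.val + d, hjn⟩ x0 rfl
  refine ⟨⟨p0.val + d, hjn⟩, vj, ?_, ?_⟩
  · intro h
    apply hPd
    rw [hvj, h]
    simp
  · have hd1 : ¬ P (d+1) := Nat.findGreatest_is_greatest (n := n) (by omega) (by omega)
    have h0 : ((Phi X)^(d+1)) (LinearMap.single K X.V p0 x0) = 0 := not_not.mp hd1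
    rw [pow_succ', Module.End.mul_apply, hvj] at h0
    exact h0

lemma exists_birth (jF : Fin n) (vj : X.V jF) (hvj : vj ≠ 0) :
    ∃ (b : ℕ) (_ : b ≤ jF.val)
      (vi : X.V ⟨jF.val - b, Nat.lt_of_le_of_lt (Nat.sub_le _ _) jF.isLt⟩),
      ((Phi X)^b) (LinearMap.single K X.V
          ⟨jF.val - b, Nat.lt_of_le_of_lt (Nat.sub_le _ _) jF.isLt⟩ vi)
        = LinearMap.single K X.V jF vj
      ∧ (b < jF.val →
          ∀ y : X.V ⟨jF.val - (b+1), Nat.lt_of_le_of_lt (Nat.sub_le _ _) jF.isLt⟩,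
          ((Phi X)^(b+1)) (LinearMap.single K X.V
              ⟨jF.val - (b+1), Nat.lt_of_le_of_lt (Nat.sub_le _ _) jF.isLt⟩ y)
            ≠ LinearMap.single K X.V jF vj) := by
  classical
  set Q : ℕ → Prop := fun b => ∃ (_ : b ≤ jF.val)
    (y : X.V ⟨jF.val - b, Nat.lt_of_le_of_lt (Nat.sub_le _ _) jF.isLt⟩),
    ((Phi X)^b) (LinearMap.single K X.V
        ⟨jF.val - b, Nat.lt_of_le_of_lt (Nat.sub_le _ _) jF.isLt⟩ y)
      = LinearMap.single K X.V jF vj with hQ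
  have hQ0 : Q 0 := by
    refine ⟨Nat.zero_le _, vj, ?_⟩
    rw [pow_zero, Module.End.one_apply]
    exact rfl
  have hQb : Q (Nat.findGreatest Q jF.val) := Nat.findGreatest_spec (Nat.zero_le _) hQ0
  set b := Nat.findGreatest Q jF.val with hb
  obtain ⟨hble, vi, hvi⟩ := hQb
  refine ⟨b, hble, vi, hvi, ?_⟩
  intro hlt y hy
  have : Q (b+1) := ⟨by omega, y, hy⟩
  exact Nat.findGreatest_is_greatest (n := jF.val) (by omega) (by omega) this

lemma split_off (hnz : ¬ X.IsZero) :
    ∃ i j : ℕ, i ≤ j ∧ j < n ∧ ∃ Y : ARep K n, QRep.Iso X ((Eij K n i j).dsum Y) := by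
  classical
  obtain ⟨jF, vj, hvj, hdead⟩ := exists_dead hnz
  obtain ⟨b, hble, vi, hbirth, hmax⟩ := exists_birth jF vj hvj
  have hilt : jF.val - b < n := Nat.lt_of_le_of_lt (Nat.sub_le _ _) jF.isLt
  have hi1lt : jF.val - (b+1) < n := Nat.lt_of_le_of_lt (Nat.sub_le _ _) jF.isLt
  have hb : (⟨jF.val - b, hilt⟩ : Fin n).val + b = jF.val := by simp; omega
  -- construct the functional
  have hfun : ∃ lam : X.V jF →ₗ[K] K, lam vj = 1 ∧
      ∀ p : Fin n, p.val < jF.val - b → ∀ x : X.V p, muMap X jF lam p x = 0 := by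
    by_cases h0 : jF.val - b = 0
    · obtain ⟨lam, hl1, _⟩ := exists_functional (⊥ : Submodule K (X.V jF)) vj
        (by simp [Submodule.mem_bot]; exact hvj)
      exact ⟨lam, hl1, fun p hp => absurd hp (by omega)⟩
    · set N : Submodule K (X.V jF) := LinearMap.range
        ((LinearMap.proj jF).comp (((Phi X)^(b+1)).comp
          (LinearMap.single K X.V ⟨jF.val - (b+1), hi1lt⟩))) with hN
      have hvN : vj ∉ N := by
        intro hmem
        obtain ⟨y, hy⟩ := hmem
        have heq := phi_pow_single_eq (b+1) ⟨jF.val - (b+1), hi1lt⟩ jF y (by simp; omega)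
        rw [show (((Phi X)^(b+1)) (LinearMap.single K X.V ⟨jF.val - (b+1), hi1lt⟩ y)) jF
            = vj from hy] at heq
        exact hmax (by omega) y heq
      obtain ⟨lam, hl1, hlN⟩ := exists_functional N vj hvN
      refine ⟨lam, hl1, ?_⟩
      intro p hp x
      show lam ((((Phi X)^(jF.val - p.val)) (LinearMap.single K X.V p x)) jF) = 0
      have hexp : jF.val - p.val = (b+1) + (jF.val - (b+1) - p.val) := by omega
      rw [hexp, pow_add, Module.End.mul_apply]
      obtain ⟨y, hy⟩ := phi_pow_single (jF.val - (b+1) - p.val) p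
        ⟨jF.val - (b+1), hi1lt⟩ x (by simp; omega)
      rw [hy]
      exact hlN _ ⟨y, rfl⟩
  obtain ⟨lam, hlam1, hlam0⟩ := hfun
  obtain ⟨Y, hiso⟩ := split_given_data ⟨jF.val - b, hilt⟩ jF b hb vi vj hbirth hdead
    lam hlam1 hlam0
  exact ⟨jF.val - b, jF.val, by omega, jF.isLt, Y, hiso⟩

lemma iso_left_of_right_zero {A B : ARep K n} (h : QRep.Iso X (A.dsum B))
    (hB : B.IsZero) : QRep.Iso X A := by
  obtain ⟨f, hf⟩ := h
  refine ⟨{ φ := fun p => (LinearMap.fst K _ _).comp (f.φ p), comm := ?_ }, ?_⟩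
  · intro e
    refine LinearMap.ext fun x => ?_
    exact congrArg Prod.fst (LinearMap.congr_fun (f.comm e) x)
  · intro p
    constructor
    · intro x y hxy
      apply (hf p).1
      refine Prod.ext hxy ?_
      rw [hB p (f.φ p x).2, hB p (f.φ p y).2]
    · intro a
      obtain ⟨x, hx⟩ := (hf p).2 (a, 0)
      exact ⟨x, by rw [show ((LinearMap.fst K _ _).comp (f.φ p)) x = (f.φ p x).1 from rfl, hx]⟩

lemma eij_ne_zero {i j : ℕ} (hij : i ≤ j) (hj : j < n) : ¬ (Eij K n i j).IsZero := by
  intro h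
  have hmem : (1 : K) ∈ ESub K n i j ⟨i, by omega⟩ := by
    rw [ESub, if_pos ⟨le_refl i, hij⟩]
    trivial
  have h1 := h ⟨i, by omega⟩ ⟨1, hmem⟩
  exact one_ne_zero (congrArg Subtype.val h1)

end Assemble

/-- every indecomposable representation of `Aₙ` is isomorphic to some interval
representation `E^{ij}` with `i ≤ j < n` (0-based). -/
theorem stmt4 (K : Type) [Field K] (n : ℕ) (X : ARep K n) (hX : QRep.Indec X) :
    ∃ i j : ℕ, i ≤ j ∧ j < n ∧ QRep.Iso X (Eij K n i j) := by
  obtain ⟨i, j, hij, hjn, Y, hiso⟩ := split_off hX.1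
  refine ⟨i, j, hij, hjn, ?_⟩
  rcases hX.2 _ _ hiso with h | h
  · exact absurd h (eij_ne_zero hij hjn)
  · exact iso_left_of_right_zero hiso h
end

section
/- The map sending a well-formed bracketing (balanced parenthesis string) of length 2n+2 to the vector (a_1,…,a_n), where a_i is the number of open-parentheses strictly between the i-th open-parenthesis and its matching close-parenthesis (omitting the last open-parenthesis, whose count is necessarily zero), is a bijection from well-formed bracketings of length 2n+2 to bracket vectors of length n. -/
/-- A bracket vector of length `n` (0-based): `a i ≤ n - i` and whenever `1 ≤ j ≤ a i`
(and `i+j` is in range), `j + a (i+j) ≤ a i`. -/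
def IsBracketVec (n : ℕ) (a : Fin n → ℕ) : Prop :=
  (∀ i, a i ≤ n - i.val) ∧
  ∀ (i : Fin n) (j : ℕ), 1 ≤ j → j ≤ a i → ∀ h : i.val + j < n, j + a ⟨i.val + j, h⟩ ≤ a i

/-- A balanced parenthesis string (`true` = open, `false` = close): equal counts, and every
prefix has at least as many opens as closes. -/
def BalancedParen (w : List Bool) : Prop :=
  w.count true = w.count false ∧ ∀ k, (w.take k).count false ≤ (w.take k).count true

/-- The list of positions of the open parentheses of `w`, in increasing order. -/
def openPositions (w : List Bool) : List ℕ :=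
  (List.range w.length).filter (fun q => w.getD q false)

/-- The position of the close parenthesis matching the open parenthesis at position `q`:
the least `q' > q` at which the depth returns to its value just before `q`. -/
def matchPos (w : List Bool) (q : ℕ) : ℕ :=
  ((List.range w.length).filter (fun q' => decide (q < q') &&
    decide (((w.take (q' + 1)).count true : ℤ) - (w.take (q' + 1)).count false =
      ((w.take q).count true : ℤ) - (w.take q).count false))).headD 0

/-- The number of open parentheses strictly between the `i`-th open parenthesis (0-based)
and its matching close parenthesis. -/
def betweenCount (w : List Bool) (i : ℕ) : ℕ :=
  ((w.drop ((openPositions w).getD i 0 + 1)).take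
    (matchPos w ((openPositions w).getD i 0) - ((openPositions w).getD i 0 + 1))).count true

/-- The vector associated to a bracketing: `a i` is the number of opens strictly between the
`i`-th open parenthesis and its match, for `i < n` (the last open parenthesis is omitted). -/
def bracketOf (n : ℕ) (w : List Bool) : Fin n → ℕ := fun i => betweenCount w i.val


/-- depth after k characters -/
def dep (w : List Bool) (k : ℕ) : ℤ :=
  ((w.take k).count true : ℤ) - (w.take k).count false

lemma dep_zero (w : List Bool) : dep w 0 = 0 := by simp [dep]

lemma count_true_add_count_false (w : List Bool) :
    w.count true + w.count false = w.length := by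
  induction w with
  | nil => simp
  | cons b t ih => cases b <;> simp [List.count_cons] <;> omega

lemma take_count_add (w : List Bool) (k : ℕ) :
    (w.take k).count true + (w.take k).count false = min k w.length := by
  rw [count_true_add_count_false, List.length_take]

lemma dep_succ (w : List Bool) (k : ℕ) (hk : k < w.length) :
    dep w (k + 1) = dep w k + (if w.getD k false then 1 else -1) := by
  have h : w.take (k+1) = w.take k ++ [w[k]] := by
    rw [List.take_succ]
    simp [List.getElem?_eq_getElem hk]
  have hgd : w.getD k false = w[k] := by
    simp [List.getD_eq_getElem?_getD, List.getElem?_eq_getElem hk]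
  rw [dep, dep, h, hgd]
  cases hb : w[k] <;> simp [List.count_append] <;> ring

lemma dep_stable (w : List Bool) (k : ℕ) (hk : w.length ≤ k) :
    dep w k = dep w w.length := by
  rw [dep, dep, List.take_of_length_le hk, List.take_length]

lemma dep_succ_ge (w : List Bool) (k : ℕ) : dep w k - 1 ≤ dep w (k + 1) := by
  rcases lt_or_ge k w.length with h | h
  · rw [dep_succ w k h]; split <;> omega
  · rw [dep_stable w k h, dep_stable w (k+1) (by omega)]; omega

lemma dep_succ_le (w : List Bool) (k : ℕ) : dep w (k + 1) ≤ dep w k + 1 := by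
  rcases lt_or_ge k w.length with h | h
  · rw [dep_succ w k h]; split <;> omega
  · rw [dep_stable w k h, dep_stable w (k+1) (by omega)]; omega

lemma balanced_iff (w : List Bool) :
    BalancedParen w ↔ dep w w.length = 0 ∧ ∀ k, 0 ≤ dep w k := by
  unfold BalancedParen dep
  constructor
  · rintro ⟨h1, h2⟩
    refine ⟨?_, fun k => ?_⟩
    · rw [List.take_length]; omega
    · have := h2 k; omega
  · rintro ⟨h1, h2⟩
    rw [List.take_length] at h1
    refine ⟨by omega, fun k => ?_⟩
    have := h2 k; omega

lemma headD_filter_range' : ∀ (len s : ℕ) (P : ℕ → Bool) (m : ℕ), s ≤ m → m < s + len →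
    P m = true → (∀ k, s ≤ k → k < m → P k = false) →
    (((List.range' s len).filter P).headD 0) = m := by
  intro len
  induction len with
  | zero => intro s P m h1 h2; omega
  | succ l ih =>
    intro s P m h1 h2 hPm hPk
    rw [List.range'_succ, List.filter_cons]
    by_cases hs : P s = true
    · have : m = s := by
        by_contra hne
        have := hPk s le_rfl (by omega)
        simp [this] at hs
      simp [hs, this]
    · rw [if_neg hs]
      have hsm : s < m := by
        rcases eq_or_lt_of_le h1 with h | h
        · exact absurd (h ▸ hPm) hs
        · exact h
      exact ih (s+1) P m hsm (by omega) hPm (fun k hk1 hk2 => hPk k (by omega) hk2)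

lemma matchPos_eq (w : List Bool) (q m : ℕ) (hq : q < m) (hm : m < w.length)
    (h1 : dep w (m+1) = dep w q) (h2 : ∀ k, q < k → k < m → dep w (k+1) ≠ dep w q) :
    matchPos w q = m := by
  unfold matchPos
  rw [List.range_eq_range']
  apply headD_filter_range' w.length 0 _ m (Nat.zero_le m) (by omega)
  · simp only [Bool.and_eq_true, decide_eq_true_eq]
    exact ⟨hq, h1⟩
  · intro k _ hk
    by_cases hqk : q < k
    · simp only [Bool.and_eq_true, decide_eq_true_eq, Bool.and_eq_false_iff]
      right
      simpa [dep] using h2 k hqk hk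
    · simp only [Bool.and_eq_false_iff]
      left
      simpa using hqk

/-- discrete intermediate value: if dep is above c at a and ≤ c at b, there is a first
crossing. -/
lemma dep_ivt (w : List Bool) (a b : ℕ) (c : ℤ) (hab : a ≤ b) (ha : c < dep w a)
    (hb : dep w b ≤ c) : ∃ k, a ≤ k ∧ k < b ∧ dep w (k+1) = c ∧ c < dep w k := by
  have hlt : a < b := by
    rcases eq_or_lt_of_le hab with h | h
    · subst h; omega
    · exact h
  have hex : ∃ k, a ≤ k ∧ dep w (k+1) ≤ c := ⟨b - 1, by omega, by
    have : b - 1 + 1 = b := by omega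
    rw [this]; exact hb⟩
  classical
  obtain ⟨hk0a, hk0d⟩ := Nat.find_spec hex
  have hmin : ∀ j, j < Nat.find hex → ¬ (a ≤ j ∧ dep w (j+1) ≤ c) :=
    fun j hj => Nat.find_min hex hj
  generalize hk0g : Nat.find hex = k0 at hk0a hk0d hmin
  have hdk0 : c < dep w k0 := by
    rcases eq_or_lt_of_le hk0a with h | h
    · rw [← h]; exact ha
    · have := hmin (k0 - 1) (by omega)
      have h1 : ¬ (a ≤ k0 - 1 ∧ dep w (k0 - 1 + 1) ≤ c) := this
      have : k0 - 1 + 1 = k0 := by omega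
      rw [this] at h1
      push_neg at h1
      have := h1 (by omega)
      omega
  have hk0b : k0 < b := by
    by_contra h
    push_neg at h
    have := hmin (b - 1) (by omega)
    push_neg at this
    have h2 := this (by omega)
    have h3 : b - 1 + 1 = b := by omega
    rw [h3] at h2
    omega
  have hstep := dep_succ_ge w k0
  exact ⟨k0, hk0a, hk0b, by omega, hdk0⟩

/-- full specification of matchPos for an open position in a balanced word. -/
lemma matchPos_spec (w : List Bool) (hbal : BalancedParen w) (q : ℕ) (hq : q < w.length)
    (hopen : w.getD q false = true) :
    q < matchPos w q ∧ matchPos w q < w.length ∧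
      dep w (matchPos w q + 1) = dep w q ∧
      ∀ k, q < k → k ≤ matchPos w q → dep w q < dep w k := by
  rw [balanced_iff] at hbal
  obtain ⟨hend, hnn⟩ := hbal
  have hdq1 : dep w (q+1) = dep w q + 1 := by rw [dep_succ w q hq, hopen]; simp
  obtain ⟨k, hk1, hk2, hk3, _⟩ := dep_ivt w (q+1) w.length (dep w q) (by omega)
    (by omega) (by rw [hend]; exact hnn q)
  have hex : ∃ m, q < m ∧ dep w (m+1) = dep w q := ⟨k, by omega, hk3⟩
  classical
  set m := Nat.find hex with hm
  obtain ⟨hm1, hm2⟩ := Nat.find_spec hex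
  have hmin : ∀ j, j < m → ¬ (q < j ∧ dep w (j+1) = dep w q) := fun j hj => Nat.find_min hex hj
  have hmlen : m < w.length := by
    have : m ≤ k := Nat.find_le ⟨by omega, hk3⟩
    omega
  have hgt : ∀ k', q < k' → k' ≤ m → dep w q < dep w k' := by
    intro k' h1 h2
    induction k' with
    | zero => omega
    | succ k'' ih =>
      rcases Nat.lt_or_ge q k'' with h | h
      · have hk'' := ih h (by omega)
        have hne := hmin k'' (by omega)
        push_neg at hne
        have := hne h
        have := dep_succ_ge w k''
        omega
      · have : k'' = q := by omega
        rw [this, hdq1]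
        omega
  have hmp : matchPos w q = m := matchPos_eq w q m hm1 hmlen hm2 (fun k' h1 h2 => by
    have := hmin k' h2; push_neg at this; exact this h1)
  rw [hmp]
  exact ⟨hm1, hmlen, hm2, hgt⟩

lemma countP_range_split (P : ℕ → Bool) (len k : ℕ) (hk : k < len) :
    (List.range len).countP (fun q => P q && decide (q < k+1)) =
      (List.range len).countP (fun q => P q && decide (q < k)) + (if P k then 1 else 0) := by
  induction len with
  | zero => omega
  | succ l ih =>
    rw [List.range_succ, List.countP_append, List.countP_append]
    rcases Nat.lt_or_ge k l with h | h
    · rw [ih h]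
      have h1 : ¬ (l < k + 1) := by omega
      have h2 : ¬ (l < k) := by omega
      simp [h1, h2, h]
    · have hkl : k = l := by omega
      subst hkl
      have hcg : (List.range k).countP (fun q => P q && decide (q < k+1)) =
          (List.range k).countP (fun q => P q && decide (q < k)) := by
        apply List.countP_congr
        intro a ha
        rw [List.mem_range] at ha
        have h1 : a < k + 1 := by omega
        simp [ha, h1]
      rw [hcg]
      simp

lemma count_take_eq_countP (w : List Bool) (k : ℕ) :
    (w.take k).count true =
      (List.range w.length).countP (fun q => w.getD q false && decide (q < k)) := by
  induction k with
  | zero => simp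
  | succ k ih =>
    rcases Nat.lt_or_ge k w.length with h | h
    · rw [countP_range_split _ _ _ h, ← ih]
      have htake : w.take (k+1) = w.take k ++ [w[k]] := by
        rw [List.take_succ]; simp [List.getElem?_eq_getElem h]
      have hgd : w.getD k false = w[k] := by
        simp [List.getD_eq_getElem?_getD, List.getElem?_eq_getElem h]
      rw [htake, List.count_append, hgd]
      cases hb : w[k] <;> simp [hb, List.count_singleton]
    · have h1 : w.take (k+1) = w.take k := by
        rw [List.take_of_length_le (by omega), List.take_of_length_le (by omega)]
      have h2 : (List.range w.length).countP (fun q => w.getD q false && decide (q < k+1)) =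
          (List.range w.length).countP (fun q => w.getD q false && decide (q < k)) := by
        apply List.countP_congr
        intro a ha
        rw [List.mem_range] at ha
        have e1 : a < k + 1 := by omega
        have e2 : a < k := by omega
        simp [e1, e2]
      rw [h1, h2, ih]

lemma count_true_eq_countP (w : List Bool) :
    w.count true = (List.range w.length).countP (fun q => w.getD q false) := by
  have := count_take_eq_countP w w.length
  rw [List.take_length] at this
  rw [this]
  apply List.countP_congr
  intro a ha
  rw [List.mem_range] at ha
  simp [ha]

lemma length_openPositions (w : List Bool) :
    (openPositions w).length = w.count true := by
  rw [openPositions, count_true_eq_countP, ← List.countP_eq_length_filter]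

lemma sorted_openPositions (w : List Bool) : (openPositions w).Pairwise (· < ·) :=
  List.Pairwise.sublist List.filter_sublist List.pairwise_lt_range

lemma mem_openPositions (w : List Bool) (q : ℕ) :
    q ∈ openPositions w ↔ q < w.length ∧ w.getD q false = true := by
  simp [openPositions, List.mem_filter, List.mem_range]

/-- bridge: trues among the first k letters = number of open positions < k -/
lemma count_take_eq_countP_openPositions (w : List Bool) (k : ℕ) :
    (w.take k).count true = (openPositions w).countP (fun y => decide (y < k)) := by
  rw [openPositions, List.countP_filter, count_take_eq_countP]
  apply List.countP_congr
  intro a _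
  rw [Bool.and_comm]

/-- key counting fact: the i-th open position is < x iff i < number of opens before x. -/
lemma getElem_lt_iff_lt_countP (l : List ℕ) (hl : l.Pairwise (· < ·)) (i : ℕ)
    (hi : i < l.length) (x : ℕ) :
    l[i] < x ↔ i < l.countP (fun y => decide (y < x)) := by
  rw [List.pairwise_iff_getElem] at hl
  constructor
  · intro h
    have hsub : (l.take (i+1)).countP (fun y => decide (y < x)) ≤
        l.countP (fun y => decide (y < x)) := (List.take_sublist _ _).countP_le
    have hall : (l.take (i+1)).countP (fun y => decide (y < x)) = (l.take (i+1)).length := by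
      rw [List.countP_eq_length]
      intro a ha
      obtain ⟨j, hj, hja⟩ := List.mem_iff_getElem.1 ha
      rw [List.getElem_take] at hja
      have hjl : j < l.length := by
        have := List.length_take_le (i+1) l
        omega
      have : l[j] ≤ l[i] := by
        rcases Nat.lt_or_ge j i with hh | hh
        · exact le_of_lt (hl j i hjl hi hh)
        · have : j = i := by
            have hlen := List.length_take (i := i+1) (l := l)
            omega
          subst this; exact le_rfl
      simp only [decide_eq_true_eq]
      omega
    have hlen : (l.take (i+1)).length = i + 1 := by
      rw [List.length_take]; omega
    omega
  · intro h
    by_contra hc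
    push_neg at hc
    have hsplit : l.countP (fun y => decide (y < x)) =
        (l.take i).countP (fun y => decide (y < x)) +
        (l.drop i).countP (fun y => decide (y < x)) := by
      rw [← List.countP_append, List.take_append_drop]
    have hdrop : (l.drop i).countP (fun y => decide (y < x)) = 0 := by
      rw [List.countP_eq_zero]
      intro a ha
      obtain ⟨j, hj, hja⟩ := List.mem_iff_getElem.1 ha
      rw [List.getElem_drop] at hja
      have hij : i + j < l.length := by
        have := List.length_drop (i := i) (l := l)
        omega
      have : l[i] ≤ l[i+j] := by
        rcases Nat.eq_or_lt_of_le (Nat.le_add_right i j) with hh | hh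
        · exact le_of_eq (by simp only [← hh])
        · exact le_of_lt (hl i (i+j) hi hij hh)
      simp only [decide_eq_true_eq]
      omega
    have htle : (l.take i).countP (fun y => decide (y < x)) ≤ i := by
      have := (l.take i).countP_le_length (p := fun y => decide (y < x))
      have := List.length_take_le i l
      omega
    omega

def opos (w : List Bool) (i : ℕ) : ℕ := (openPositions w).getD i 0
def mpos (w : List Bool) (i : ℕ) : ℕ := matchPos w (opos w i)

lemma dep_eq (w : List Bool) (k : ℕ) :
    dep w k = ((w.take k).count true : ℤ) - (w.take k).count false := rfl

lemma count_window (w : List Bool) (a b : ℕ) (hab : a ≤ b) (bb : Bool) :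
    (w.take a).count bb + ((w.drop a).take (b - a)).count bb = (w.take b).count bb := by
  obtain ⟨d, rfl⟩ : ∃ d, b = a + d := ⟨b - a, by omega⟩
  rw [Nat.add_sub_cancel_left, List.take_add, List.count_append]

lemma opos_eq_getElem (w : List Bool) (i : ℕ) (h : i < (openPositions w).length) :
    opos w i = (openPositions w)[i] := by
  rw [opos, List.getD_eq_getElem?_getD, List.getElem?_eq_getElem h]
  rfl

section Balanced

variable {n : ℕ} {w : List Bool}

lemma opens_len (hlen : w.length = 2*n+2) (hbal : BalancedParen w) :
    (openPositions w).length = n + 1 := by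
  have h1 := length_openPositions w
  have h2 := count_true_add_count_false w
  have h3 := hbal.1
  omega

lemma opos_open (hlen : w.length = 2*n+2) (hbal : BalancedParen w) (i : ℕ) (hi : i ≤ n) :
    opos w i < w.length ∧ w.getD (opos w i) false = true := by
  have hl := opens_len hlen hbal
  have h : i < (openPositions w).length := by omega
  rw [opos_eq_getElem w i h]
  have : (openPositions w)[i] ∈ openPositions w := List.getElem_mem h
  rwa [mem_openPositions] at this

lemma opos_mono (hlen : w.length = 2*n+2) (hbal : BalancedParen w) (i j : ℕ)
    (hij : i < j) (hj : j ≤ n) : opos w i < opos w j := by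
  have hl := opens_len hlen hbal
  have hi' : i < (openPositions w).length := by omega
  have hj' : j < (openPositions w).length := by omega
  rw [opos_eq_getElem w i hi', opos_eq_getElem w j hj']
  exact (List.pairwise_iff_getElem.1 (sorted_openPositions w)) i j hi' hj' hij

lemma opos_lt_iff (hlen : w.length = 2*n+2) (hbal : BalancedParen w) (j : ℕ) (hj : j ≤ n)
    (x : ℕ) : opos w j < x ↔ j < (w.take x).count true := by
  have hl := opens_len hlen hbal
  have hj' : j < (openPositions w).length := by omega
  rw [opos_eq_getElem w j hj', count_take_eq_countP_openPositions]
  exact getElem_lt_iff_lt_countP _ (sorted_openPositions w) j hj' x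

lemma t_opos (hlen : w.length = 2*n+2) (hbal : BalancedParen w) (i : ℕ) (hi : i ≤ n) :
    (w.take (opos w i)).count true = i := by
  have h1 : ¬ (opos w i < opos w i) := lt_irrefl _
  rw [opos_lt_iff hlen hbal i hi] at h1
  rcases Nat.lt_or_ge ((w.take (opos w i)).count true) i with h | h
  · exfalso
    have h2 : opos w ((w.take (opos w i)).count true) < opos w i :=
      opos_mono hlen hbal _ i h hi
    rw [opos_lt_iff hlen hbal _ (by omega)] at h2
    omega
  · omega

end Balanced

section Balanced2

variable {n : ℕ} {w : List Bool}

lemma t_opos_succ (hlen : w.length = 2*n+2) (hbal : BalancedParen w) (i : ℕ) (hi : i ≤ n) :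
    (w.take (opos w i + 1)).count true = i + 1 := by
  obtain ⟨hplen, hpopen⟩ := opos_open hlen hbal i hi
  have htake : w.take (opos w i + 1) = w.take (opos w i) ++ [w[opos w i]] := by
    rw [List.take_succ]; simp [List.getElem?_eq_getElem hplen]
  have hgd : w.getD (opos w i) false = w[opos w i] := by
    simp [List.getD_eq_getElem?_getD, List.getElem?_eq_getElem hplen]
  rw [htake, List.count_append, t_opos hlen hbal i hi, ← hgd, hpopen]
  simp

lemma opos_of_open (hlen : w.length = 2*n+2) (hbal : BalancedParen w) (p : ℕ)
    (hp : p < w.length) (hopen : w.getD p false = true) :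
    (w.take p).count true ≤ n ∧ opos w ((w.take p).count true) = p := by
  have hl := opens_len hlen hbal
  have hmem : p ∈ openPositions w := (mem_openPositions w p).2 ⟨hp, hopen⟩
  obtain ⟨idx, hidx, hidxp⟩ := List.mem_iff_getElem.1 hmem
  have h1 : opos w idx = p := by rw [opos_eq_getElem w idx hidx, hidxp]
  have h2 : (w.take p).count true = idx := by
    rw [← h1]; exact t_opos hlen hbal idx (by omega)
  rw [h2, h1]
  exact ⟨by omega, rfl⟩

lemma mspec (hlen : w.length = 2*n+2) (hbal : BalancedParen w) (i : ℕ) (hi : i ≤ n) :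
    opos w i < mpos w i ∧ mpos w i < w.length ∧
      dep w (mpos w i + 1) = dep w (opos w i) ∧
      ∀ k, opos w i < k → k ≤ mpos w i → dep w (opos w i) < dep w k := by
  obtain ⟨hplen, hpopen⟩ := opos_open hlen hbal i hi
  exact matchPos_spec w hbal (opos w i) hplen hpopen

lemma t_mpos (hlen : w.length = 2*n+2) (hbal : BalancedParen w) (i : ℕ) (hi : i ≤ n) :
    (w.take (mpos w i)).count true = i + 1 + betweenCount w i := by
  obtain ⟨h1, h2, h3, h4⟩ := mspec hlen hbal i hi
  have hwin := count_window w (opos w i + 1) (mpos w i) (by omega) true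
  have hbc : betweenCount w i =
      ((w.drop (opos w i + 1)).take (mpos w i - (opos w i + 1))).count true := rfl
  have ht := t_opos_succ hlen hbal i hi
  omega

lemma close_at_mpos (hlen : w.length = 2*n+2) (hbal : BalancedParen w) (i : ℕ) (hi : i ≤ n) :
    w.getD (mpos w i) false = false := by
  obtain ⟨h1, h2, h3, h4⟩ := mspec hlen hbal i hi
  have h5 := h4 (mpos w i) h1 le_rfl
  have h6 := dep_succ w (mpos w i) h2
  cases hb : w.getD (mpos w i) false
  · rfl
  · rw [hb] at h6; simp at h6; omega

lemma mpos_eq (hlen : w.length = 2*n+2) (hbal : BalancedParen w) (i : ℕ) (hi : i ≤ n) :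
    mpos w i = opos w i + 2 * betweenCount w i + 1 := by
  obtain ⟨h1, h2, h3, h4⟩ := mspec hlen hbal i hi
  have hcl := close_at_mpos hlen hbal i hi
  have h6 := dep_succ w (mpos w i) h2
  rw [hcl] at h6; simp at h6
  have htm := t_mpos hlen hbal i hi
  have htp := t_opos hlen hbal i hi
  have e1 := take_count_add w (mpos w i)
  have e2 := take_count_add w (opos w i)
  have d1 := dep_eq w (mpos w i)
  have d2 := dep_eq w (opos w i)
  have d3 := dep_eq w (mpos w i + 1)
  have hmin1 : min (mpos w i) w.length = mpos w i := by omega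
  have hmin2 : min (opos w i) w.length = opos w i := by omega
  rw [hmin1] at e1; rw [hmin2] at e2
  omega

lemma bc_le (hlen : w.length = 2*n+2) (hbal : BalancedParen w) (i : ℕ) (hi : i ≤ n) :
    betweenCount w i ≤ n - i := by
  have htm := t_mpos hlen hbal i hi
  have hle : (w.take (mpos w i)).count true ≤ w.count true := (List.take_sublist _ _).count_le _
  have h2 := count_true_add_count_false w
  have h3 := hbal.1
  omega

lemma bc_n (hlen : w.length = 2*n+2) (hbal : BalancedParen w) : betweenCount w n = 0 := by
  have := bc_le hlen hbal n le_rfl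
  omega

lemma opos_lt_mpos_iff (hlen : w.length = 2*n+2) (hbal : BalancedParen w) (i j : ℕ)
    (hi : i ≤ n) (hj : j ≤ n) :
    opos w i < mpos w j ↔ i ≤ j + betweenCount w j := by
  rw [opos_lt_iff hlen hbal i hi, t_mpos hlen hbal j hj]
  omega

lemma mpos_lt_opos_iff (hlen : w.length = 2*n+2) (hbal : BalancedParen w) (i j : ℕ)
    (hi : i ≤ n) (hj : j ≤ n) :
    mpos w j < opos w i ↔ j + betweenCount w j < i := by
  have hne : mpos w j ≠ opos w i := by
    intro h
    have h1 := close_at_mpos hlen hbal j hj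
    have h2 := (opos_open hlen hbal i hi).2
    rw [h] at h1; rw [h1] at h2; exact Bool.noConfusion h2
  have := opos_lt_mpos_iff hlen hbal i j hi hj
  omega

/-- nesting of matched pairs -/
lemma mpos_nest (hlen : w.length = 2*n+2) (hbal : BalancedParen w) (i j : ℕ)
    (hi : i ≤ n) (hj : j ≤ n) (h1 : opos w i < opos w j) (h2 : opos w j < mpos w i) :
    mpos w j < mpos w i := by
  obtain ⟨hi1, hi2, hi3, hi4⟩ := mspec hlen hbal i hi
  obtain ⟨hj1, hj2, hj3, hj4⟩ := mspec hlen hbal j hj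
  -- dep (opos j) > dep (opos i)
  have hdj : dep w (opos w i) < dep w (opos w j) := hi4 _ h1 (by omega)
  -- find first return to dep (opos j) within (opos j, mpos i]
  have hjlen : opos w j < w.length := (opos_open hlen hbal j hj).1
  have hjopen : w.getD (opos w j) false = true := (opos_open hlen hbal j hj).2
  have hdj1 : dep w (opos w j + 1) = dep w (opos w j) + 1 := by
    rw [dep_succ w (opos w j) hjlen, hjopen]; simp
  obtain ⟨k, hk1, hk2, hk3, _⟩ := dep_ivt w (opos w j + 1) (mpos w i + 1) (dep w (opos w j))
    (by omega) (by omega) (by rw [hi3]; omega)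
  have hmjk : mpos w j ≤ k := by
    by_contra hc
    push_neg at hc
    have := hj4 (k+1) (by omega) (by omega)
    omega
  have hne : mpos w j ≠ mpos w i := by
    intro h
    rw [h, hi3] at hj3
    omega
  omega

end Balanced2

section Balanced3

variable {n : ℕ} {w : List Bool}

lemma count_mono_take (w : List Bool) (a b : ℕ) (hab : a ≤ b) (bb : Bool) :
    (w.take a).count bb ≤ (w.take b).count bb := by
  have := count_window w a b hab bb
  omega

lemma bc_nest (hlen : w.length = 2*n+2) (hbal : BalancedParen w) (i j : ℕ) (hi : i ≤ n)
    (hj1 : 1 ≤ j) (hj2 : j ≤ betweenCount w i) (hijn : i + j ≤ n) :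
    j + betweenCount w (i+j) ≤ betweenCount w i := by
  have h1 : opos w i < opos w (i+j) := opos_mono hlen hbal i (i+j) (by omega) hijn
  have h2 : opos w (i+j) < mpos w i :=
    (opos_lt_mpos_iff hlen hbal (i+j) i hijn hi).2 (by omega)
  have h3 : mpos w (i+j) < mpos w i := mpos_nest hlen hbal i (i+j) hi hijn h1 h2
  have h4 : (w.take (mpos w (i+j))).count true ≤ (w.take (mpos w i)).count true :=
    count_mono_take w _ _ (by omega) true
  have h5 := t_mpos hlen hbal i hi
  have h6 := t_mpos hlen hbal (i+j) hijn
  omega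

lemma mapsTo_bracket (hlen : w.length = 2*n+2) (hbal : BalancedParen w) :
    IsBracketVec n (bracketOf n w) := by
  constructor
  · intro i
    exact bc_le hlen hbal i.val (by omega)
  · intro i j hj1 hj2 h
    exact bc_nest hlen hbal i.val j (by omega) hj1 hj2 (by omega)

lemma dep_ivt_up (w : List Bool) (a b : ℕ) (c : ℤ) (hab : a ≤ b) (ha : dep w a ≤ c)
    (hb : c < dep w b) : ∃ k, a ≤ k ∧ k < b ∧ dep w k = c := by
  have hex : ∃ k, a ≤ k ∧ c < dep w k := ⟨b, hab, hb⟩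
  classical
  obtain ⟨hk0a, hk0d⟩ := Nat.find_spec hex
  have hmin : ∀ j, j < Nat.find hex → ¬ (a ≤ j ∧ c < dep w j) :=
    fun j hj => Nat.find_min hex hj
  have hfb : Nat.find hex ≤ b := Nat.find_le ⟨hab, hb⟩
  generalize hk0g : Nat.find hex = k0 at hk0a hk0d hmin hfb
  have hk0gt : a < k0 := by
    rcases Nat.eq_or_lt_of_le hk0a with h | h
    · exfalso; rw [← h] at hk0d; omega
    · exact h
  have hprev : dep w (k0 - 1) ≤ c := by
    have := hmin (k0 - 1) (by omega)
    push_neg at this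
    have h2 := this (by omega)
    omega
  have hstep : dep w k0 ≤ dep w (k0 - 1) + 1 := by
    have := dep_succ_le w (k0 - 1)
    have he : k0 - 1 + 1 = k0 := by omega
    rw [he] at this
    exact this
  have hstep2 : dep w (k0 - 1) - 1 ≤ dep w k0 := by
    have := dep_succ_ge w (k0 - 1)
    have he : k0 - 1 + 1 = k0 := by omega
    rw [he] at this
    exact this
  exact ⟨k0 - 1, by omega, by omega, by omega⟩

lemma close_is_match (hlen : w.length = 2*n+2) (hbal : BalancedParen w) (q : ℕ)
    (hq : q < w.length) (hclose : w.getD q false = false) :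
    ∃ p, p < q ∧ p < w.length ∧ w.getD p false = true ∧ matchPos w p = q := by
  have hnn := (balanced_iff w).1 hbal
  have hdq : dep w (q+1) = dep w q - 1 := by
    rw [dep_succ w q hq, hclose]; simp; omega
  classical
  obtain ⟨k, hk1, hk2, hk3⟩ := dep_ivt_up w 0 q (dep w (q+1)) (by omega)
    (by rw [dep_zero]; exact hnn.2 (q+1)) (by omega)
  set P : ℕ → Prop := fun p => dep w p = dep w (q+1) with hP
  have hPk : P k := hk3
  have hple : k ≤ q := by omega
  set p := Nat.findGreatest P q with hpdef
  have hPp : P p := Nat.findGreatest_spec hple hPk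
  have hPp' : dep w p = dep w (q+1) := hPp
  have hpq : p ≤ q := Nat.findGreatest_le q
  have hmax : ∀ k', p < k' → k' ≤ q → ¬ P k' := fun k' h1 h2 =>
    Nat.findGreatest_is_greatest h1 h2
  have hplt : p < q := by
    rcases Nat.eq_or_lt_of_le hpq with h | h
    · exfalso; rw [h] at hPp'; omega
    · exact h
  have hpopen : w.getD p false = true := by
    cases hb : w.getD p false
    · exfalso
      have hdp1 : dep w (p+1) = dep w p - 1 := by
        rw [dep_succ w p (by omega), hb]; simp; omega
      obtain ⟨k', hk'1, hk'2, hk'3⟩ := dep_ivt_up w (p+1) q (dep w (q+1)) (by omega)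
        (by omega) (by omega)
      exact hmax k' (by omega) (by omega) hk'3
    · rfl
  refine ⟨p, hplt, by omega, hpopen, ?_⟩
  apply matchPos_eq w p q hplt hq (by omega)
  intro k' h1 h2 hc
  exact hmax (k'+1) (by omega) (by omega) (show dep w (k'+1) = dep w (q+1) by omega)

lemma mpos_inj (hlen : w.length = 2*n+2) (hbal : BalancedParen w) (i j : ℕ) (hi : i ≤ n)
    (hj : j ≤ n) (h : mpos w i = mpos w j) : i = j := by
  by_contra hne
  rcases Nat.lt_or_ge i j with hij | hij
  · obtain ⟨hi1, hi2, hi3, hi4⟩ := mspec hlen hbal i hi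
    obtain ⟨hj1, hj2, hj3, hj4⟩ := mspec hlen hbal j hj
    have h1 : opos w i < opos w j := opos_mono hlen hbal i j hij hj
    have h2 : opos w j < mpos w i := by rw [h]; exact hj1
    have h3 := hi4 (opos w j) h1 (by omega)
    rw [← h] at hj3
    omega
  · have hij' : j < i := by omega
    obtain ⟨hi1, hi2, hi3, hi4⟩ := mspec hlen hbal i hi
    obtain ⟨hj1, hj2, hj3, hj4⟩ := mspec hlen hbal j hj
    have h1 : opos w j < opos w i := opos_mono hlen hbal j i hij' hi
    have h2 : opos w i < mpos w j := by rw [← h]; exact hi1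
    have h3 := hj4 (opos w i) h1 (by omega)
    rw [h] at hi3
    omega

end Balanced3

lemma countP_eq_card_filter (P : ℕ → Bool) (N : ℕ) :
    (List.range N).countP P = ((Finset.range N).filter (fun q => P q = true)).card := by
  induction N with
  | zero => simp
  | succ m ih =>
    rw [List.range_succ, List.countP_append, Finset.range_add_one, Finset.filter_insert]
    by_cases h : P m = true
    · rw [if_pos h, Finset.card_insert_of_notMem (by simp), ← ih]
      simp [h]
    · rw [if_neg h, ← ih]
      simp [h]

lemma count_take_eq_countP_false (w : List Bool) (k : ℕ) :
    (w.take k).count false =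
      (List.range w.length).countP (fun q => !(w.getD q false) && decide (q < k)) := by
  induction k with
  | zero => simp
  | succ k ih =>
    rcases Nat.lt_or_ge k w.length with h | h
    · rw [countP_range_split _ _ _ h, ← ih]
      have htake : w.take (k+1) = w.take k ++ [w[k]] := by
        rw [List.take_succ]; simp [List.getElem?_eq_getElem h]
      have hgd : w.getD k false = w[k] := by
        simp [List.getD_eq_getElem?_getD, List.getElem?_eq_getElem h]
      rw [htake, List.count_append, hgd]
      cases hb : w[k] <;> simp [hb, List.count_singleton]
    · have h1 : w.take (k+1) = w.take k := by
        rw [List.take_of_length_le (by omega), List.take_of_length_le (by omega)]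
      have h2 : (List.range w.length).countP (fun q => !(w.getD q false) && decide (q < k+1)) =
          (List.range w.length).countP (fun q => !(w.getD q false) && decide (q < k)) := by
        apply List.countP_congr
        intro a ha
        rw [List.mem_range] at ha
        have e1 : a < k + 1 := by omega
        have e2 : a < k := by omega
        simp [e1, e2]
      rw [h1, h2, ih]

section Balanced4

variable {n : ℕ} {w : List Bool}

lemma f_opos (hlen : w.length = 2*n+2) (hbal : BalancedParen w) (i : ℕ) (hi : i ≤ n) :
    (w.take (opos w i)).count false =
      ((Finset.range (n+1)).filter (fun j => mpos w j < opos w i)).card := by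
  rw [count_take_eq_countP_false, countP_eq_card_filter]
  symm
  apply Finset.card_bij (fun j _ => mpos w j)
  · intro j hj
    simp only [Finset.mem_filter, Finset.mem_range] at hj
    obtain ⟨hj1, hj2⟩ := hj
    have hjn : j ≤ n := by omega
    obtain ⟨h1, h2, h3, h4⟩ := mspec hlen hbal j hjn
    simp only [Finset.mem_filter, Finset.mem_range]
    refine ⟨h2, ?_⟩
    simp only [Bool.and_eq_true, Bool.not_eq_true', decide_eq_true_eq]
    exact ⟨close_at_mpos hlen hbal j hjn, hj2⟩
  · intro j1 hj1 j2 hj2 he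
    simp only [Finset.mem_filter, Finset.mem_range] at hj1 hj2
    exact mpos_inj hlen hbal j1 j2 (by omega) (by omega) he
  · intro q hq
    simp only [Finset.mem_filter, Finset.mem_range, Bool.and_eq_true, Bool.not_eq_true',
      decide_eq_true_eq] at hq
    obtain ⟨hq1, hq2, hq3⟩ := hq
    obtain ⟨p, hp1, hp2, hp3, hp4⟩ := close_is_match hlen hbal q hq1 hq2
    obtain ⟨hidx, hop⟩ := opos_of_open hlen hbal p hp2 hp3
    refine ⟨(w.take p).count true, ?_, ?_⟩
    · simp only [Finset.mem_filter, Finset.mem_range]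
      constructor
      · omega
      · show mpos w ((w.take p).count true) < opos w i
        rw [mpos, hop, hp4]
        exact hq3
    · show mpos w ((w.take p).count true) = q
      rw [mpos, hop, hp4]

lemma opos_formula (hlen : w.length = 2*n+2) (hbal : BalancedParen w) (i : ℕ) (hi : i ≤ n) :
    opos w i = i + ((Finset.range (n+1)).filter (fun j => j + betweenCount w j < i)).card := by
  have h1 := take_count_add w (opos w i)
  have h2 : min (opos w i) w.length = opos w i := by
    have := (opos_open hlen hbal i hi).1
    omega
  rw [h2] at h1
  have h3 := t_opos hlen hbal i hi
  have h4 := f_opos hlen hbal i hi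
  have h5 : ((Finset.range (n+1)).filter (fun j => mpos w j < opos w i)).card =
      ((Finset.range (n+1)).filter (fun j => j + betweenCount w j < i)).card := by
    congr 1
    apply Finset.filter_congr
    intro j hj
    simp only [Finset.mem_range] at hj
    exact mpos_lt_opos_iff hlen hbal i j hi (by omega)
  omega

lemma open_iff_opos (hlen : w.length = 2*n+2) (hbal : BalancedParen w) (q : ℕ)
    (hq : q < w.length) :
    w.getD q false = true ↔ ∃ i, i ≤ n ∧ opos w i = q := by
  constructor
  · intro h
    obtain ⟨h1, h2⟩ := opos_of_open hlen hbal q hq h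
    exact ⟨_, h1, h2⟩
  · rintro ⟨i, hi, rfl⟩
    exact (opos_open hlen hbal i hi).2

end Balanced4

lemma bracket_injOn (n : ℕ) :
    Set.InjOn (bracketOf n) {w : List Bool | w.length = 2 * n + 2 ∧ BalancedParen w} := by
  intro w hw w' hw' heq
  obtain ⟨hlen, hbal⟩ := hw
  obtain ⟨hlen', hbal'⟩ := hw'
  have hbc : ∀ j, j ≤ n → betweenCount w j = betweenCount w' j := by
    intro j hj
    rcases Nat.lt_or_ge j n with h | h
    · exact congrFun heq ⟨j, h⟩
    · have hjn : j = n := by omega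
      rw [hjn, bc_n hlen hbal, bc_n hlen' hbal']
  have hopos : ∀ i, i ≤ n → opos w i = opos w' i := by
    intro i hi
    rw [opos_formula hlen hbal i hi, opos_formula hlen' hbal' i hi]
    congr 2
    apply Finset.filter_congr
    intro j hj
    simp only [Finset.mem_range] at hj
    rw [hbc j (by omega)]
  have hgd : ∀ q, q < w.length → w.getD q false = w'.getD q false := by
    intro q hq
    have h1 := open_iff_opos hlen hbal q hq
    have h2 := open_iff_opos hlen' hbal' q (by omega)
    have h3 : (w.getD q false = true) ↔ (w'.getD q false = true) := by
      rw [h1, h2]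
      constructor
      · rintro ⟨i, hi, he⟩; exact ⟨i, hi, by rw [← hopos i hi]; exact he⟩
      · rintro ⟨i, hi, he⟩; exact ⟨i, hi, by rw [hopos i hi]; exact he⟩
    cases hb : w.getD q false
    · cases hb' : w'.getD q false
      · rfl
      · rw [hb, hb'] at h3; simp at h3
    · cases hb' : w'.getD q false
      · rw [hb, hb'] at h3; simp at h3
      · rfl
  apply List.ext_getElem (by omega)
  intro q h1 h2
  have := hgd q h1
  rwa [List.getD_eq_getElem?_getD, List.getD_eq_getElem?_getD, List.getElem?_eq_getElem h1,
    List.getElem?_eq_getElem h2] at this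

def EE (A : ℕ → ℕ) (j : ℕ) : ℕ := j + A j
def CC (A : ℕ → ℕ) (i : ℕ) : ℕ := ((Finset.range i).filter (fun j => EE A j < i)).card
def PP (A : ℕ → ℕ) (i : ℕ) : ℕ := i + CC A i
def MM (A : ℕ → ℕ) (j : ℕ) : ℕ := PP A j + 2 * A j + 1
def wOf (n : ℕ) (A : ℕ → ℕ) : List Bool :=
  (List.range (2*n+2)).map (fun q => decide (∃ i, i ≤ n ∧ PP A i = q))

section Constr

variable {n : ℕ} {A : ℕ → ℕ}

/-- hypotheses bundle -/
def GoodVec (n : ℕ) (A : ℕ → ℕ) : Prop :=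
  (∀ j, j ≤ n → j + A j ≤ n) ∧
  (∀ j t, j + t ≤ n → 1 ≤ t → t ≤ A j → t + A (j + t) ≤ A j)

lemma laminar (hG : GoodVec n A) (k j : ℕ) (hkj : k < j) (hj : j ≤ EE A k) (hjn : j ≤ n) :
    EE A j ≤ EE A k := by
  obtain ⟨h1, h2⟩ := hG
  have := h2 k (j - k) (by omega) (by omega) (by rw [EE] at hj; omega)
  rw [EE, EE]
  have he : k + (j - k) = j := by omega
  rw [he] at this
  omega

lemma EE_le (hG : GoodVec n A) (j : ℕ) (hj : j ≤ n) : EE A j ≤ n := hG.1 j hj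

lemma CC_le (i : ℕ) : CC A i ≤ i := by
  calc CC A i ≤ (Finset.range i).card := Finset.card_filter_le _ _
  _ = i := Finset.card_range i

lemma CC_mono (i i' : ℕ) (h : i ≤ i') : CC A i ≤ CC A i' := by
  apply Finset.card_le_card
  intro k hk
  simp only [Finset.mem_filter, Finset.mem_range] at hk ⊢
  omega

lemma PP_mono (i i' : ℕ) (h : i < i') : PP A i < PP A i' := by
  have := CC_mono (A := A) i i' (by omega)
  rw [PP, PP]; omega

lemma PP_mono_le (i i' : ℕ) (h : i ≤ i') : PP A i ≤ PP A i' := by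
  rcases Nat.eq_or_lt_of_le h with h | h
  · rw [h]
  · exact le_of_lt (PP_mono i i' h)

lemma CC_lower (hG : GoodVec n A) (j i : ℕ) (hj : j ≤ n) (hij : EE A j < i) :
    CC A j + A j + 1 ≤ CC A i := by
  have hsub : (Finset.range j).filter (fun k => EE A k < j) ∪ Finset.Icc j (EE A j)
      ⊆ (Finset.range i).filter (fun k => EE A k < i) := by
    intro k hk
    simp only [Finset.mem_union, Finset.mem_filter, Finset.mem_range, Finset.mem_Icc] at hk ⊢
    have hjE : j ≤ EE A j := by rw [EE]; omega
    rcases hk with ⟨hk1, hk2⟩ | ⟨hk1, hk2⟩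
    · constructor <;> omega
    · refine ⟨by omega, ?_⟩
      rcases Nat.eq_or_lt_of_le hk1 with h | h
      · rw [← h]; omega
      · have := laminar hG j k h hk2 (by
          have := EE_le hG j hj
          omega)
        omega
  have hdisj : Disjoint ((Finset.range j).filter (fun k => EE A k < j))
      (Finset.Icc j (EE A j)) := by
    rw [Finset.disjoint_left]
    intro k hk1 hk2
    simp only [Finset.mem_filter, Finset.mem_range] at hk1
    simp only [Finset.mem_Icc] at hk2
    omega
  have hcard := Finset.card_le_card hsub
  rw [Finset.card_union_of_disjoint hdisj, Nat.card_Icc] at hcard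
  rw [CC, CC] at *
  rw [EE] at hcard
  omega

lemma CC_diff (hG : GoodVec n A) (j i : ℕ) (hj : j ≤ n) (hji : j < i) (hiE : i ≤ EE A j) :
    CC A i ≤ CC A j + (i - j - 1) := by
  have hsub : (Finset.range i).filter (fun k => EE A k < i) ⊆
      (Finset.range j).filter (fun k => EE A k < j) ∪ Finset.Ioo j i := by
    intro k hk
    simp only [Finset.mem_filter, Finset.mem_range] at hk
    obtain ⟨hk1, hk2⟩ := hk
    simp only [Finset.mem_union, Finset.mem_filter, Finset.mem_range, Finset.mem_Ioo]
    rcases Nat.lt_trichotomy k j with h | h | h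
    · left
      refine ⟨h, ?_⟩
      by_contra hc
      push_neg at hc
      have := laminar hG k j h (by rw [EE] at *; omega) hj
      omega
    · exfalso; rw [← h] at hiE; omega
    · right; exact ⟨h, by omega⟩
  have hcard := Finset.card_le_card hsub
  have := Finset.card_union_le ((Finset.range j).filter (fun k => EE A k < j))
    (Finset.Ioo j i)
  rw [Nat.card_Ioo] at this
  rw [CC, CC] at *
  omega

lemma claimA1 (hG : GoodVec n A) (i j : ℕ) (hj : j ≤ n) (h : EE A j < i) :
    MM A j < PP A i := by
  have := CC_lower hG j i hj h
  rw [MM, PP, PP, EE] at *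
  omega

lemma claimA2 (hG : GoodVec n A) (i j : ℕ) (hj : j ≤ n) (h : i ≤ EE A j) :
    PP A i < MM A j := by
  rcases le_or_gt i j with hij | hij
  · have := PP_mono_le (A := A) i j hij
    rw [MM]; omega
  · have := CC_diff hG j i hj hij h
    rw [MM, PP, PP, EE] at *
    omega

lemma PP_ne_MM (hG : GoodVec n A) (i j : ℕ) (hj : j ≤ n) : PP A i ≠ MM A j := by
  rcases le_or_gt i (EE A j) with h | h
  · have := claimA2 hG i j hj h; omega
  · have := claimA1 hG i j hj h; omega

lemma claimA3 (hG : GoodVec n A) (u v : ℕ) (hu : u ≤ n) (huv : u < v) (hvE : v ≤ EE A u) :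
    MM A v < MM A u := by
  have hvn : v ≤ n := by have := EE_le hG u hu; omega
  have h1 := CC_diff hG u v hu huv hvE
  have h2 : EE A v ≤ EE A u := laminar hG u v huv hvE hvn
  simp only [MM, PP, EE] at h1 h2 hvE ⊢
  omega

lemma MM_inj (hG : GoodVec n A) (j j' : ℕ) (hj : j ≤ n) (hj' : j' ≤ n)
    (h : MM A j = MM A j') : j = j' := by
  by_contra hne
  -- first, EE A j = EE A j'
  have hEE : EE A j = EE A j' := by
    rcases Nat.lt_trichotomy (EE A j) (EE A j') with hE | hE | hE
    · have h1 : PP A (EE A j') < MM A j' := claimA2 hG _ j' hj' le_rfl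
      have h2 : MM A j < PP A (EE A j') := claimA1 hG _ j hj hE
      omega
    · exact hE
    · have h1 : PP A (EE A j) < MM A j := claimA2 hG _ j hj le_rfl
      have h2 : MM A j' < PP A (EE A j) := claimA1 hG _ j' hj' hE
      omega
  rcases Nat.lt_or_ge j j' with hlt | hge
  · have : MM A j' < MM A j := claimA3 hG j j' hj hlt (by rw [hEE, EE]; omega)
    omega
  · have hlt' : j' < j := by omega
    have : MM A j < MM A j' := claimA3 hG j' j hj' hlt' (by rw [← hEE, EE]; omega)
    omega

end Constr

def TCn (n : ℕ) (A : ℕ → ℕ) (k : ℕ) : ℕ :=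
  ((Finset.range (n+1)).filter (fun i => PP A i < k)).card
def FCn (n : ℕ) (A : ℕ → ℕ) (k : ℕ) : ℕ :=
  ((Finset.range (n+1)).filter (fun j => MM A j < k)).card

section Constr2

variable {n : ℕ} {A : ℕ → ℕ}

lemma PP_le (i : ℕ) : PP A i ≤ 2 * i := by
  have := CC_le (A := A) i
  rw [PP]; omega

lemma PP_lt_len (i : ℕ) (hi : i ≤ n) : PP A i < 2*n+2 := by
  have := PP_le (A := A) i
  omega

lemma MM_lt_len (hG : GoodVec n A) (j : ℕ) (hj : j ≤ n) : MM A j < 2*n+2 := by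
  have h1 := CC_le (A := A) j
  have h2 := hG.1 j hj
  rw [MM, PP]
  omega

lemma CCn_eq (i : ℕ) (hi : i ≤ n + 1) :
    ((Finset.range (n+1)).filter (fun j => EE A j < i)).card = CC A i := by
  rw [CC]
  congr 1
  apply Finset.ext
  intro j
  simp only [Finset.mem_filter, Finset.mem_range]
  constructor
  · rintro ⟨h1, h2⟩
    refine ⟨?_, h2⟩
    rw [EE] at h2; omega
  · rintro ⟨h1, h2⟩
    exact ⟨by omega, h2⟩

lemma claimA6 (hG : GoodVec n A) (i : ℕ) (hi : i ≤ n) :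
    (Finset.range (n+1)).filter (fun j => MM A j < MM A i) =
      ((Finset.range (n+1)).filter (fun j => EE A j < i)) ∪ Finset.Ioc i (EE A i) := by
  apply Finset.ext
  intro j
  simp only [Finset.mem_union, Finset.mem_filter, Finset.mem_range, Finset.mem_Ioc]
  constructor
  · rintro ⟨hj, hMM⟩
    have hjn : j ≤ n := by omega
    rcases Nat.lt_or_ge (EE A j) i with hE | hE
    · left; exact ⟨hj, hE⟩
    · right
      rcases Nat.lt_trichotomy j i with h | h | h
      · exfalso
        have := claimA3 hG j i hjn h (by rw [EE] at hE ⊢; omega)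
        omega
      · exfalso; rw [h] at hMM; omega
      · refine ⟨h, ?_⟩
        by_contra hc
        push_neg at hc
        have h1 := claimA1 hG j i hi hc
        have h2 := claimA2 hG j j hjn (by rw [EE]; omega)
        omega
  · rintro h
    rcases h with ⟨hj, hE⟩ | ⟨h1, h2⟩
    · have h1 := claimA1 hG i j (by omega) hE
      have h2 := claimA2 hG i i hi (by rw [EE]; omega)
      exact ⟨hj, by omega⟩
    · have hjn : j ≤ n := by
        have := EE_le hG i hi
        omega
      exact ⟨by omega, claimA3 hG i j hi h1 h2⟩

lemma FC_MM (hG : GoodVec n A) (i : ℕ) (hi : i ≤ n) :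
    FCn n A (MM A i) = CC A i + (EE A i - i) := by
  rw [FCn, claimA6 hG i hi, Finset.card_union_of_disjoint, Nat.card_Ioc, CCn_eq i (by omega)]
  · rw [Finset.disjoint_left]
    intro k hk1 hk2
    simp only [Finset.mem_filter, Finset.mem_range] at hk1
    simp only [Finset.mem_Ioc] at hk2
    rw [EE] at hk1
    omega

lemma length_wOf : (wOf n A).length = 2*n+2 := by
  rw [wOf, List.length_map, List.length_range]

lemma wOf_getD (q : ℕ) (hq : q < 2*n+2) :
    (wOf n A).getD q false = decide (∃ i, i ≤ n ∧ PP A i = q) := by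
  have hlen : (wOf n A).length = 2*n+2 := length_wOf
  have hq' : q < (wOf n A).length := by omega
  rw [List.getD_eq_getElem?_getD, List.getElem?_eq_getElem hq']
  simp only [Option.getD_some]
  simp only [wOf, List.getElem_map]
  congr 1
  rw [List.getElem_range]

lemma tc_eq (hG : GoodVec n A) (k : ℕ) (hk : k ≤ 2*n+2) :
    ((wOf n A).take k).count true = TCn n A k := by
  rw [count_take_eq_countP, countP_eq_card_filter, length_wOf, TCn]
  symm
  apply Finset.card_bij (fun i _ => PP A i)
  · intro i hi
    simp only [Finset.mem_filter, Finset.mem_range] at hi ⊢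
    obtain ⟨hi1, hi2⟩ := hi
    refine ⟨by have := PP_lt_len (n := n) (A := A) i (by omega); omega, ?_⟩
    rw [wOf_getD _ (PP_lt_len i (by omega : i ≤ n))]
    simp only [Bool.and_eq_true, decide_eq_true_eq]
    exact ⟨⟨i, by omega, rfl⟩, hi2⟩
  · intro i1 hi1 i2 hi2 he
    simp only [Finset.mem_filter, Finset.mem_range] at hi1 hi2
    by_contra hne
    rcases Nat.lt_or_ge i1 i2 with h | h
    · have := PP_mono (A := A) i1 i2 h; omega
    · have := PP_mono (A := A) i2 i1 (by omega); omega
  · intro q hq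
    simp only [Finset.mem_filter, Finset.mem_range] at hq
    obtain ⟨hq1, hq2⟩ := hq
    rw [wOf_getD _ hq1] at hq2
    simp only [Bool.and_eq_true, decide_eq_true_eq] at hq2
    obtain ⟨⟨i, hi1, hi2⟩, hq3⟩ := hq2
    exact ⟨i, by simp only [Finset.mem_filter, Finset.mem_range]; exact ⟨by omega, by omega⟩,
      hi2⟩

lemma completeness (hG : GoodVec n A) :
    ((Finset.range (n+1)).image (PP A)) ∪ ((Finset.range (n+1)).image (MM A)) =
      Finset.range (2*n+2) := by
  apply Finset.eq_of_subset_of_card_le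
  · intro q hq
    simp only [Finset.mem_union, Finset.mem_image, Finset.mem_range] at hq ⊢
    rcases hq with ⟨i, hi, rfl⟩ | ⟨j, hj, rfl⟩
    · exact PP_lt_len i (by omega)
    · exact MM_lt_len hG j (by omega)
  · rw [Finset.card_range]
    rw [Finset.card_union_of_disjoint]
    · rw [Finset.card_image_of_injOn, Finset.card_image_of_injOn, Finset.card_range]
      · omega
      · intro j1 hj1 j2 hj2 he
        simp only [Finset.mem_coe, Finset.mem_range] at hj1 hj2
        exact MM_inj hG j1 j2 (by omega) (by omega) he
      · intro i1 hi1 i2 hi2 he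
        simp only [Finset.mem_coe, Finset.mem_range] at hi1 hi2
        by_contra hne
        rcases Nat.lt_or_ge i1 i2 with h | h
        · have := PP_mono (A := A) i1 i2 h; omega
        · have := PP_mono (A := A) i2 i1 (by omega); omega
    · rw [Finset.disjoint_left]
      rintro q hq1 hq2
      simp only [Finset.mem_image, Finset.mem_range] at hq1 hq2
      obtain ⟨i, hi, he1⟩ := hq1
      obtain ⟨j, hj, he2⟩ := hq2
      exact PP_ne_MM hG i j (by omega) (by rw [he1, he2])

lemma fc_eq (hG : GoodVec n A) (k : ℕ) (hk : k ≤ 2*n+2) :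
    ((wOf n A).take k).count false = FCn n A k := by
  rw [count_take_eq_countP_false, countP_eq_card_filter, length_wOf, FCn]
  symm
  apply Finset.card_bij (fun j _ => MM A j)
  · intro j hj
    simp only [Finset.mem_filter, Finset.mem_range] at hj ⊢
    obtain ⟨hj1, hj2⟩ := hj
    refine ⟨by have := MM_lt_len hG j (by omega); omega, ?_⟩
    rw [wOf_getD _ (MM_lt_len hG j (by omega : j ≤ n))]
    simp only [Bool.and_eq_true, Bool.not_eq_true', decide_eq_true_eq, decide_eq_false_iff_not]
    refine ⟨?_, by omega⟩
    rintro ⟨i, hi, he⟩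
    exact PP_ne_MM hG i j (by omega) he
  · intro j1 hj1 j2 hj2 he
    simp only [Finset.mem_filter, Finset.mem_range] at hj1 hj2
    exact MM_inj hG j1 j2 (by omega) (by omega) he
  · intro q hq
    simp only [Finset.mem_filter, Finset.mem_range] at hq
    obtain ⟨hq1, hq2⟩ := hq
    rw [wOf_getD _ hq1] at hq2
    simp only [Bool.and_eq_true, Bool.not_eq_true', decide_eq_true_eq,
      decide_eq_false_iff_not] at hq2
    obtain ⟨hq2, hq3⟩ := hq2
    have hmem : q ∈ Finset.range (2*n+2) := Finset.mem_range.2 hq1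
    rw [← completeness hG] at hmem
    simp only [Finset.mem_union, Finset.mem_image, Finset.mem_range] at hmem
    rcases hmem with ⟨i, hi, he⟩ | ⟨j, hj, he⟩
    · exact absurd ⟨i, by omega, he⟩ hq2
    · exact ⟨j, by simp only [Finset.mem_filter, Finset.mem_range]; exact ⟨hj, by omega⟩, he⟩

lemma dep_wOf (hG : GoodVec n A) (k : ℕ) (hk : k ≤ 2*n+2) :
    dep (wOf n A) k = (TCn n A k : ℤ) - FCn n A k := by
  rw [dep_eq, tc_eq hG k hk, fc_eq hG k hk]

end Constr2

section Constr3

variable {n : ℕ} {A : ℕ → ℕ}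

lemma PP_lt_PP_iff (i j : ℕ) : PP A j < PP A i ↔ j < i := by
  constructor
  · intro h
    by_contra hc
    push_neg at hc
    have := PP_mono_le (A := A) i j hc
    omega
  · exact PP_mono j i

lemma TC_PP (i : ℕ) (hi : i ≤ n) : TCn n A (PP A i) = i := by
  rw [TCn]
  have : (Finset.range (n+1)).filter (fun j => PP A j < PP A i) = Finset.range i := by
    apply Finset.ext
    intro j
    simp only [Finset.mem_filter, Finset.mem_range, PP_lt_PP_iff]
    omega
  rw [this, Finset.card_range]

lemma TC_PP1 (i : ℕ) (hi : i ≤ n) : TCn n A (PP A i + 1) = i + 1 := by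
  rw [TCn]
  have : (Finset.range (n+1)).filter (fun j => PP A j < PP A i + 1) = Finset.range (i+1) := by
    apply Finset.ext
    intro j
    simp only [Finset.mem_filter, Finset.mem_range]
    constructor
    · rintro ⟨h1, h2⟩
      have : ¬ (i < j) := by
        intro hc
        have := PP_mono (A := A) i j hc
        omega
      omega
    · intro h
      have := PP_mono_le (A := A) j i (by omega)
      omega
  rw [this, Finset.card_range]

lemma PP_lt_MM_iff (hG : GoodVec n A) (i j : ℕ) (hi : i ≤ n) (hj : j ≤ n) :
    PP A j < MM A i ↔ j ≤ EE A i := by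
  constructor
  · intro h
    by_contra hc
    push_neg at hc
    have := claimA1 hG j i hi hc
    omega
  · intro h
    exact claimA2 hG j i hi h

lemma MM_lt_PP_iff (hG : GoodVec n A) (i j : ℕ) (hi : i ≤ n) (hj : j ≤ n) :
    MM A j < PP A i ↔ EE A j < i := by
  constructor
  · intro h
    by_contra hc
    push_neg at hc
    have := claimA2 hG i j hj hc
    omega
  · intro h
    exact claimA1 hG i j hj h

lemma TC_MM (hG : GoodVec n A) (i : ℕ) (hi : i ≤ n) : TCn n A (MM A i) = EE A i + 1 := by
  rw [TCn]
  have : (Finset.range (n+1)).filter (fun j => PP A j < MM A i) = Finset.range (EE A i + 1) := by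
    apply Finset.ext
    intro j
    simp only [Finset.mem_filter, Finset.mem_range]
    have hE := EE_le hG i hi
    constructor
    · rintro ⟨h1, h2⟩
      rw [PP_lt_MM_iff hG i j hi (by omega)] at h2
      omega
    · intro h
      have hjn : j ≤ n := by omega
      rw [PP_lt_MM_iff hG i j hi hjn]
      exact ⟨by omega, by omega⟩
  rw [this, Finset.card_range]

lemma TC_MM1 (hG : GoodVec n A) (i : ℕ) (hi : i ≤ n) :
    TCn n A (MM A i + 1) = EE A i + 1 := by
  rw [TCn, ← TC_MM hG i hi, TCn]
  congr 1
  apply Finset.filter_congr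
  intro j hj
  simp only [Finset.mem_range] at hj
  have := PP_ne_MM hG j i hi
  omega

lemma FC_PP (hG : GoodVec n A) (i : ℕ) (hi : i ≤ n) : FCn n A (PP A i) = CC A i := by
  rw [FCn, ← CCn_eq (n := n) (A := A) i (by omega)]
  congr 1
  apply Finset.filter_congr
  intro j hj
  simp only [Finset.mem_range] at hj
  exact MM_lt_PP_iff hG i j hi (by omega)

lemma FC_MM1 (hG : GoodVec n A) (i : ℕ) (hi : i ≤ n) :
    FCn n A (MM A i + 1) = CC A i + (EE A i - i) + 1 := by
  rw [FCn]
  have hsplit : (Finset.range (n+1)).filter (fun j => MM A j < MM A i + 1) =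
      ((Finset.range (n+1)).filter (fun j => MM A j < MM A i)) ∪ {i} := by
    apply Finset.ext
    intro j
    simp only [Finset.mem_union, Finset.mem_filter, Finset.mem_range, Finset.mem_singleton]
    constructor
    · rintro ⟨h1, h2⟩
      rcases Nat.lt_or_ge (MM A j) (MM A i) with h | h
      · left; exact ⟨h1, h⟩
      · right
        exact MM_inj hG j i (by omega) hi (by omega)
    · rintro (⟨h1, h2⟩ | rfl)
      · exact ⟨h1, by omega⟩
      · exact ⟨by omega, by omega⟩
  rw [hsplit, Finset.card_union_of_disjoint, Finset.card_singleton]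
  · have := FC_MM hG i hi
    rw [FCn] at this
    omega
  · rw [Finset.disjoint_left]
    rintro q hq1 hq2
    simp only [Finset.mem_filter, Finset.mem_range] at hq1
    simp only [Finset.mem_singleton] at hq2
    subst hq2
    omega

lemma TC_full (k : ℕ) (hk : 2*n+2 ≤ k) : TCn n A k = n + 1 := by
  rw [TCn]
  have : (Finset.range (n+1)).filter (fun i => PP A i < k) = Finset.range (n+1) := by
    apply Finset.filter_true_of_mem
    intro i hi
    simp only [Finset.mem_range] at hi
    have := PP_lt_len (n := n) (A := A) i (by omega)
    omega
  rw [this, Finset.card_range]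

lemma FC_full (hG : GoodVec n A) (k : ℕ) (hk : 2*n+2 ≤ k) : FCn n A k = n + 1 := by
  rw [FCn]
  have : (Finset.range (n+1)).filter (fun j => MM A j < k) = Finset.range (n+1) := by
    apply Finset.filter_true_of_mem
    intro j hj
    simp only [Finset.mem_range] at hj
    have := MM_lt_len hG j (by omega)
    omega
  rw [this, Finset.card_range]

lemma FC_le_TC (k : ℕ) : FCn n A k ≤ TCn n A k := by
  apply Finset.card_le_card
  intro j hj
  simp only [Finset.mem_filter, Finset.mem_range] at hj ⊢
  have : PP A j < MM A j := by rw [MM]; omega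
  omega

lemma balanced_wOf (hG : GoodVec n A) : BalancedParen (wOf n A) := by
  constructor
  · have h1 := tc_eq hG (2*n+2) le_rfl
    have h2 := fc_eq hG (2*n+2) le_rfl
    have hfull : (wOf n A).take (2*n+2) = wOf n A := by
      rw [List.take_of_length_le (by rw [length_wOf])]
    rw [hfull] at h1 h2
    rw [h1, h2, TC_full _ le_rfl, FC_full hG _ le_rfl]
  · intro k
    rcases Nat.le_or_ge k (2*n+2) with h | h
    · rw [tc_eq hG k h, fc_eq hG k h]
      exact FC_le_TC k
    · have hfull : (wOf n A).take k = wOf n A := by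
        rw [List.take_of_length_le (by rw [length_wOf]; omega)]
      rw [hfull]
      have h1 := tc_eq hG (2*n+2) le_rfl
      have h2 := fc_eq hG (2*n+2) le_rfl
      have hfull2 : (wOf n A).take (2*n+2) = wOf n A := by
        rw [List.take_of_length_le (by rw [length_wOf])]
      rw [hfull2] at h1 h2
      rw [h1, h2, TC_full _ le_rfl, FC_full hG _ le_rfl]

lemma dep_gt_wOf (hG : GoodVec n A) (i : ℕ) (hi : i ≤ n) (q : ℕ) (h1 : PP A i < q)
    (h2 : q ≤ MM A i) : dep (wOf n A) (PP A i) < dep (wOf n A) q := by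
  have hq2 : q ≤ 2*n+2 := by
    have := MM_lt_len hG i hi
    omega
  have hPle : PP A i ≤ 2*n+2 := by
    have := PP_lt_len (n := n) (A := A) i hi
    omega
  rw [dep_wOf hG _ hPle, dep_wOf hG _ hq2, TC_PP i hi, FC_PP hG i hi]
  have hclaim1 : TCn n A q = (i+1) +
      ((Finset.range (n+1)).filter (fun k => i < k ∧ PP A k < q)).card := by
    rw [TCn]
    have hsplit : (Finset.range (n+1)).filter (fun k => PP A k < q) =
        ((Finset.range (n+1)).filter (fun k => k ≤ i)) ∪
          ((Finset.range (n+1)).filter (fun k => i < k ∧ PP A k < q)) := by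
      apply Finset.ext
      intro k
      simp only [Finset.mem_union, Finset.mem_filter, Finset.mem_range]
      constructor
      · rintro ⟨hk1, hk2⟩
        rcases le_or_gt k i with h | h
        · left; exact ⟨hk1, h⟩
        · right; exact ⟨hk1, h, hk2⟩
      · rintro (⟨hk1, hk2⟩ | ⟨hk1, hk2, hk3⟩)
        · have := PP_mono_le (A := A) k i hk2
          exact ⟨hk1, by omega⟩
        · exact ⟨hk1, hk3⟩
    rw [hsplit, Finset.card_union_of_disjoint]
    · congr 1
      have : (Finset.range (n+1)).filter (fun k => k ≤ i) = Finset.range (i+1) := by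
        apply Finset.ext
        intro k
        simp only [Finset.mem_filter, Finset.mem_range]
        omega
      rw [this, Finset.card_range]
    · rw [Finset.disjoint_left]
      rintro k hk1 hk2
      simp only [Finset.mem_filter, Finset.mem_range] at hk1 hk2
      omega
  have hclaim2 : FCn n A q ≤ CC A i +
      ((Finset.range (n+1)).filter (fun k => i < k ∧ PP A k < q)).card := by
    have hsub : (Finset.range (n+1)).filter (fun j => MM A j < q) ⊆
        ((Finset.range (n+1)).filter (fun j => MM A j < PP A i)) ∪
          ((Finset.range (n+1)).filter (fun k => i < k ∧ PP A k < q)) := by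
      intro j hj
      simp only [Finset.mem_filter, Finset.mem_range] at hj
      obtain ⟨hj1, hj2⟩ := hj
      simp only [Finset.mem_union, Finset.mem_filter, Finset.mem_range]
      rcases Nat.lt_or_ge (MM A j) (PP A i) with h | h
      · left; exact ⟨hj1, h⟩
      · right
        have hne : PP A i ≠ MM A j := PP_ne_MM hG i j (by omega)
        have hPiMj : PP A i < MM A j := by omega
        have hiEj : i ≤ EE A j := by
          by_contra hc
          push_neg at hc
          have := claimA1 hG i j (by omega) hc
          omega
        have hMM : MM A j < MM A i := by omega
        have hmem : j ∈ (Finset.range (n+1)).filter (fun j' => MM A j' < MM A i) := by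
          simp only [Finset.mem_filter, Finset.mem_range]
          exact ⟨hj1, hMM⟩
        rw [claimA6 hG i hi] at hmem
        simp only [Finset.mem_union, Finset.mem_filter, Finset.mem_range,
          Finset.mem_Ioc] at hmem
        rcases hmem with ⟨_, hE⟩ | ⟨hgt, _⟩
        · omega
        · have : PP A j < MM A j := by rw [MM]; omega
          exact ⟨hj1, hgt, by omega⟩
    have hcard := Finset.card_le_card hsub
    have hle := Finset.card_union_le ((Finset.range (n+1)).filter (fun j => MM A j < PP A i))
      ((Finset.range (n+1)).filter (fun k => i < k ∧ PP A k < q))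
    have hFP := FC_PP hG i hi
    rw [FCn] at hFP ⊢
    omega
  omega

lemma matchPos_wOf (hG : GoodVec n A) (i : ℕ) (hi : i ≤ n) :
    matchPos (wOf n A) (PP A i) = MM A i := by
  have hPM : PP A i < MM A i := by rw [MM]; omega
  have hMlen : MM A i < (wOf n A).length := by
    rw [length_wOf]; exact MM_lt_len hG i hi
  apply matchPos_eq _ _ _ hPM hMlen
  · have h1 : MM A i + 1 ≤ 2*n+2 := by
      have := MM_lt_len hG i hi
      omega
    have h2 : PP A i ≤ 2*n+2 := by
      have := PP_lt_len (n := n) (A := A) i hi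
      omega
    rw [dep_wOf hG _ h1, dep_wOf hG _ h2, TC_MM1 hG i hi, FC_MM1 hG i hi, TC_PP i hi,
      FC_PP hG i hi]
    have : i ≤ EE A i := by rw [EE]; omega
    have := CC_le (A := A) i
    omega
  · intro k hk1 hk2
    have := dep_gt_wOf hG i hi (k+1) (by omega) (by omega)
    omega

lemma openPositions_wOf (hG : GoodVec n A) :
    openPositions (wOf n A) = (List.range (n+1)).map (PP A) := by
  have hs1 : (openPositions (wOf n A)).Pairwise (· < ·) := sorted_openPositions _
  have hs2 : ((List.range (n+1)).map (PP A)).Pairwise (· < ·) := by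
    rw [List.pairwise_map]
    exact List.pairwise_lt_range.imp (fun h => PP_mono _ _ h)
  have hmem : ∀ q, q ∈ openPositions (wOf n A) ↔ q ∈ (List.range (n+1)).map (PP A) := by
    intro q
    rw [mem_openPositions, List.mem_map]
    constructor
    · rintro ⟨hq1, hq2⟩
      rw [length_wOf] at hq1
      rw [wOf_getD q hq1] at hq2
      simp only [decide_eq_true_eq] at hq2
      obtain ⟨i, hi, he⟩ := hq2
      exact ⟨i, List.mem_range.2 (by omega), he⟩
    · rintro ⟨i, hi, rfl⟩
      rw [List.mem_range] at hi
      have hlt := PP_lt_len (n := n) (A := A) i (by omega)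
      rw [length_wOf]
      refine ⟨hlt, ?_⟩
      rw [wOf_getD _ hlt]
      simp only [decide_eq_true_eq]
      exact ⟨i, by omega, rfl⟩
  apply fun (hp : List.Perm (openPositions (wOf n A)) ((List.range (n+1)).map (PP A))) (h1 : List.Pairwise (· ≤ ·) (openPositions (wOf n A))) (h2 : List.Pairwise (· ≤ ·) ((List.range (n+1)).map (PP A))) => List.Perm.eq_of_sortedLE h1.sortedLE h2.sortedLE hp
  · exact (List.perm_ext_iff_of_nodup (hs1.imp ne_of_lt) (hs2.imp ne_of_lt)).2 hmem
  · exact hs1.imp le_of_lt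
  · exact hs2.imp le_of_lt

lemma opos_wOf (hG : GoodVec n A) (i : ℕ) (hi : i ≤ n) : opos (wOf n A) i = PP A i := by
  rw [opos, openPositions_wOf hG]
  have hlen : i < ((List.range (n+1)).map (PP A)).length := by
    rw [List.length_map, List.length_range]; omega
  rw [List.getD_eq_getElem?_getD, List.getElem?_eq_getElem hlen]
  simp only [Option.getD_some, List.getElem_map]
  congr 1
  rw [List.getElem_range]

lemma bc_wOf (hG : GoodVec n A) (i : ℕ) (hi : i ≤ n) : betweenCount (wOf n A) i = A i := by
  have hop : (openPositions (wOf n A)).getD i 0 = PP A i := opos_wOf hG i hi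
  rw [betweenCount, hop, matchPos_wOf hG i hi]
  have hPM : PP A i + 1 ≤ MM A i := by rw [MM]; omega
  have hwin := count_window (wOf n A) (PP A i + 1) (MM A i) hPM true
  have h1 := tc_eq hG (PP A i + 1) (by
    have := PP_lt_len (n := n) (A := A) i hi; omega)
  have h2 := tc_eq hG (MM A i) (by
    have := MM_lt_len hG i hi; omega)
  rw [h1, h2, TC_PP1 i hi, TC_MM hG i hi] at hwin
  rw [EE] at hwin
  omega

end Constr3

lemma bracket_surjOn (n : ℕ) :
    Set.SurjOn (bracketOf n) {w : List Bool | w.length = 2 * n + 2 ∧ BalancedParen w}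
      {a : Fin n → ℕ | IsBracketVec n a} := by
  intro a ha
  simp only [Set.mem_setOf_eq] at ha
  obtain ⟨hle, hnest⟩ := ha
  classical
  set A : ℕ → ℕ := fun j => if h : j < n then a ⟨j, h⟩ else 0 with hA
  have hG : GoodVec n A := by
    constructor
    · intro j hj
      rcases Nat.lt_or_ge j n with h | h
      · have := hle ⟨j, h⟩
        simp only [hA]
        rw [dif_pos h]
        simp only at this
        omega
      · simp only [hA]
        rw [dif_neg (by omega)]
        omega
    · intro j t hjt ht1 ht2
      have hjn : j < n := by
        by_contra hc
        push_neg at hc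
        simp only [hA] at ht2
        rw [dif_neg (by omega)] at ht2
        omega
      simp only [hA] at ht2 ⊢
      rw [dif_pos hjn] at ht2 ⊢
      rcases Nat.lt_or_ge (j + t) n with h | h
      · rw [dif_pos h]
        exact hnest ⟨j, hjn⟩ t ht1 ht2 h
      · rw [dif_neg (by omega)]
        omega
  refine ⟨wOf n A, ⟨?_, balanced_wOf hG⟩, ?_⟩
  · rw [length_wOf]
  · funext i
    show betweenCount (wOf n A) i.val = a i
    rw [bc_wOf hG i.val (by omega)]
    simp only [hA]
    rw [dif_pos i.isLt]

/-- the map sending a well-formed bracketing of length `2n+2` to the vector of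
counts of open parentheses strictly between each open parenthesis (except the last) and its
matching close parenthesis is a bijection onto the set of bracket vectors of length `n`. -/
theorem stmt13 (n : ℕ) :
    Set.BijOn (bracketOf n) {w : List Bool | w.length = 2 * n + 2 ∧ BalancedParen w}
      {a : Fin n → ℕ | IsBracketVec n a} := by
  refine ⟨?_, bracket_injOn n, bracket_surjOn n⟩
  intro w hw
  exact mapsTo_bracket hw.1 hw.2
end

section
/- The number of bracket vectors of length n equals the Catalan number C_{n+1} = (1/(n+2))·binom(2n+2, n+1). -/
open Tree

/-- value of list at index, default 0. -/
def bv (q : List ℕ) (i : ℕ) : ℕ := q.getD i 0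

lemma bv_of_ge {q : List ℕ} {i : ℕ} (h : q.length ≤ i) : bv q i = 0 := by
  simp [bv, List.getD_eq_getElem?_getD, List.getElem?_eq_none h]

lemma bv_cons_zero (k : ℕ) (rest : List ℕ) : bv (k :: rest) 0 = k := rfl

lemma bv_cons_succ (k : ℕ) (rest : List ℕ) (j : ℕ) : bv (k :: rest) (j+1) = bv rest j := rfl

lemma bv_append_left {A : List ℕ} (B : List ℕ) {i : ℕ} (h : i < A.length) :
    bv (A ++ B) i = bv A i := by
  simp [bv, List.getD_eq_getElem?_getD, List.getElem?_append, h]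

lemma bv_append_right (A B : List ℕ) {i : ℕ} (h : A.length ≤ i) :
    bv (A ++ B) i = bv B (i - A.length) := by
  simp [bv, List.getD_eq_getElem?_getD, List.getElem?_append_right h]

lemma bv_take {q : List ℕ} {k i : ℕ} (h : i < k) : bv (q.take k) i = bv q i := by
  simp [bv, List.getD_eq_getElem?_getD, List.getElem?_take_of_lt h]

lemma bv_drop (q : List ℕ) (k i : ℕ) : bv (q.drop k) i = bv q (k + i) := by
  simp [bv, List.getD_eq_getElem?_getD, List.getElem?_drop]

lemma bv_eq_getElem {q : List ℕ} {i : ℕ} (h : i < q.length) : bv q i = q[i] := by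
  simp [bv, List.getD_eq_getElem?_getD, List.getElem?_eq_getElem h]

/-- the "Q-condition": arcs `i → i + q_i` stay strictly in range and are non-crossing. -/
def IsQ (q : List ℕ) : Prop :=
  (∀ i, i < q.length → i + bv q i < q.length) ∧
  (∀ i k, i < k → k ≤ i + bv q i → k + bv q k ≤ i + bv q i)

lemma isQ_glue {A B : List ℕ} (hA : IsQ A) (hB : IsQ B) :
    IsQ (A.length :: (A ++ B)) := by
  obtain ⟨hA1, hA2⟩ := hA
  obtain ⟨hB1, hB2⟩ := hB
  set m := A.length with hm
  set q := m :: (A ++ B) with hq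
  have hlen : q.length = m + B.length + 1 := by simp [hq]; rfl
  have hv0 : bv q 0 = m := rfl
  have hvA : ∀ j, j < m → bv q (j+1) = bv A j := fun j hj => by
    rw [hq, bv_cons_succ, bv_append_left _ hj]
  have hvB : ∀ j, bv q (m + 1 + j) = bv B j := fun j => by
    have h1 : m + 1 + j = (m + j) + 1 := by omega
    rw [hq, h1, bv_cons_succ, bv_append_right _ _ (by omega)]
    congr 1; omega
  constructor
  · intro i hi
    rcases Nat.eq_zero_or_pos i with h0 | h0
    · subst h0; rw [hv0]; omega
    rcases Nat.lt_or_ge i (m + 1) with hiA | hiA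
    · have hj : i - 1 < m := by omega
      have e : i = (i - 1) + 1 := by omega
      rw [e, hvA _ hj]
      have := hA1 (i - 1) hj
      omega
    · have e : i = m + 1 + (i - m - 1) := by omega
      rw [e, hvB]
      have hj : i - m - 1 < B.length := by omega
      have := hB1 (i - m - 1) hj
      omega
  · intro i k hik hk
    by_cases hkl : k < q.length
    swap
    · rw [bv_of_ge (le_of_not_gt hkl)]; omega
    by_cases hil : i < q.length
    swap
    · rw [bv_of_ge (le_of_not_gt hil)] at hk; omega
    rcases Nat.eq_zero_or_pos i with h0 | h0
    · subst h0
      rw [hv0] at hk ⊢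
      have hj : k - 1 < m := by omega
      have e : k = (k - 1) + 1 := by omega
      rw [e, hvA _ hj]
      have := hA1 (k - 1) hj
      omega
    rcases Nat.lt_or_ge i (m + 1) with hiA | hiA
    · -- i in A part
      have hji : i - 1 < m := by omega
      have ei : i = (i - 1) + 1 := by omega
      rw [ei, hvA _ hji] at hk ⊢
      have hbound := hA1 (i - 1) hji
      have hjk : k - 1 < m := by omega
      have ek : k = (k - 1) + 1 := by omega
      rw [ek, hvA _ hjk]
      have := hA2 (i - 1) (k - 1) (by omega) (by omega)
      omega
    · -- i in B part
      have ei : i = m + 1 + (i - m - 1) := by omega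
      rw [ei, hvB] at hk ⊢
      have ek : k = m + 1 + (k - m - 1) := by omega
      rw [ek, hvB]
      have := hB2 (i - m - 1) (k - m - 1) (by omega) (by omega)
      omega

lemma isQ_cons {c : ℕ} {rest : List ℕ} (h : IsQ (c :: rest)) :
    c ≤ rest.length ∧ IsQ (rest.take c) ∧ IsQ (rest.drop c) := by
  obtain ⟨h1, h2⟩ := h
  have hc : c ≤ rest.length := by
    have := h1 0 (by simp)
    rw [bv_cons_zero] at this
    simp at this
    omega
  have hTlen : (rest.take c).length = c := by simp [Nat.min_eq_left hc]
  have hDlen : (rest.drop c).length = rest.length - c := by simp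
  have hT1 : ∀ j, j < c → j + bv (rest.take c) j < c := by
    intro j hj
    rw [bv_take hj]
    have := h2 0 (j+1) (by omega) (by rw [bv_cons_zero]; omega)
    rw [bv_cons_zero, bv_cons_succ] at this
    omega
  refine ⟨hc, ⟨?_, ?_⟩, ?_, ?_⟩
  · intro j hj; rw [hTlen] at hj ⊢; exact hT1 j hj
  · intro i k hik hk
    by_cases hkc : k < c
    swap
    · rw [bv_of_ge (by omega)]; omega
    have hic : i < c := by omega
    rw [bv_take hic] at hk ⊢
    rw [bv_take hkc]
    have := h2 (i+1) (k+1) (by omega) (by rw [bv_cons_succ]; omega)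
    rw [bv_cons_succ, bv_cons_succ] at this
    omega
  · intro j hj
    rw [hDlen] at hj ⊢
    rw [bv_drop]
    have := h1 (c + j + 1) (by simp; omega)
    have e : c + j + 1 = (c + j) + 1 := rfl
    rw [e, bv_cons_succ] at this
    simp at this
    omega
  · intro i k hik hk
    by_cases hkc : k < rest.length - c
    swap
    · rw [bv_of_ge (by omega)]; omega
    have hic : i < rest.length - c := by omega
    rw [bv_drop] at hk ⊢
    rw [bv_drop]
    have := h2 (c + i + 1) (c + k + 1) (by omega) (by
      have e : c + i + 1 = (c + i) + 1 := rfl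
      rw [e, bv_cons_succ]; omega)
    rw [show c + i + 1 = (c + i) + 1 from rfl, show c + k + 1 = (c + k) + 1 from rfl,
      bv_cons_succ, bv_cons_succ] at this
    omega

/-- preorder left-subtree-size encoding of a binary tree -/
def toVec : Tree Unit → List ℕ
  | .nil => []
  | .node _ l r => l.numNodes :: (toVec l ++ toVec r)

def ofVec : List ℕ → Tree Unit
  | [] => .nil
  | (k :: rest) => .node () (ofVec (rest.take k)) (ofVec (rest.drop k))
termination_by q => q.length
decreasing_by
  · simp only [List.length_cons, List.length_take]; omega
  · simp only [List.length_cons, List.length_drop]; omega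

lemma ofVec_nil : ofVec [] = Tree.nil := by rw [ofVec]

lemma ofVec_cons (k : ℕ) (rest : List ℕ) :
    ofVec (k :: rest) = Tree.node () (ofVec (rest.take k)) (ofVec (rest.drop k)) := by
  rw [ofVec]

lemma length_toVec (t : Tree Unit) : (toVec t).length = t.numNodes := by
  induction t with
  | nil => rfl
  | node _ l r ihl ihr => simp [toVec, ihl, ihr]

lemma ofVec_toVec (t : Tree Unit) : ofVec (toVec t) = t := by
  induction t with
  | nil => rw [toVec, ofVec_nil]
  | node _ l r ihl ihr =>
    rw [toVec, ofVec_cons, ← length_toVec l, List.take_left, List.drop_left, ihl, ihr]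

lemma isQ_toVec (t : Tree Unit) : IsQ (toVec t) := by
  induction t with
  | nil =>
    constructor
    · intro i h; simp [toVec] at h
    · intro i k h1 h2
      rw [bv_of_ge (i := i) (by simp [toVec])] at h2; omega
  | node _ l r ihl ihr =>
    rw [toVec, ← length_toVec l]
    exact isQ_glue ihl ihr

lemma toVec_ofVec (q : List ℕ) (h : IsQ q) : toVec (ofVec q) = q := by
  have key : ∀ N (q : List ℕ), q.length ≤ N → IsQ q → toVec (ofVec q) = q := by
    intro N
    induction N with
    | zero =>
      intro q hq _
      have : q = [] := List.eq_nil_of_length_eq_zero (by omega)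
      subst this; rw [ofVec_nil]; rfl
    | succ N ih =>
      intro q hq hQ
      match q with
      | [] => rw [ofVec_nil]; rfl
      | c :: rest =>
        obtain ⟨hc, hT, hD⟩ := isQ_cons hQ
        simp only [List.length_cons] at hq
        have iT := ih (rest.take c) (by simp; omega) hT
        have iD := ih (rest.drop c) (by simp; omega) hD
        rw [ofVec_cons, toVec, iT, iD, ← length_toVec, iT]
        simp [List.length_take, Nat.min_eq_left hc, List.take_append_drop]
  exact key q.length q le_rfl h

section Equivs
variable (n : ℕ)

/-- the list associated to a bracket vector -/
def bvList (a : Fin n → ℕ) : List ℕ := (List.ofFn a) ++ [0]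

lemma bvList_length (a : Fin n → ℕ) : (bvList n a).length = n + 1 := by
  simp [bvList]

lemma bv_bvList_lt (a : Fin n → ℕ) {i : ℕ} (h : i < n) :
    bv (bvList n a) i = a ⟨i, h⟩ := by
  rw [bvList, bv_append_left _ (by simpa), bv_eq_getElem (by simpa)]
  simp

lemma bv_bvList_ge (a : Fin n → ℕ) {i : ℕ} (h : n ≤ i) :
    bv (bvList n a) i = 0 := by
  rcases eq_or_lt_of_le h with h | h
  · rw [bvList, bv_append_right _ _ (by simpa using h.le)]
    subst h; simp [bv]
  · exact bv_of_ge (by rw [bvList_length]; omega)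

lemma isQ_bvList {a : Fin n → ℕ} (ha : IsBracketVec n a) : IsQ (bvList n a) := by
  obtain ⟨h1, h2⟩ := ha
  constructor
  · intro i hi
    rw [bvList_length] at hi ⊢
    rcases Nat.lt_or_ge i n with h | h
    · rw [bv_bvList_lt n a h]
      have := h1 ⟨i, h⟩
      simp only [Fin.val_mk] at this
      omega
    · rw [bv_bvList_ge n a h]; omega
  · intro i k hik hk
    rcases Nat.lt_or_ge i n with h | h
    swap
    · rw [bv_bvList_ge n a h] at hk; omega
    rw [bv_bvList_lt n a h] at hk ⊢
    rcases Nat.lt_or_ge k n with h' | h'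
    · rw [bv_bvList_lt n a h']
      have h'' : (⟨i, h⟩ : Fin n).val + (k - i) < n := by simp only [Fin.val_mk]; omega
      have := h2 ⟨i, h⟩ (k - i) (by omega) (by omega) h''
      have e : (⟨(⟨i, h⟩ : Fin n).val + (k - i), h''⟩ : Fin n) = ⟨k, h'⟩ :=
        Fin.ext (by simp only [Fin.val_mk]; omega)
      rw [e] at this
      omega
    · rw [bv_bvList_ge n a h']
      omega

lemma isBracketVec_of_isQ {q : List ℕ} (hlen : q.length = n + 1) (hq : IsQ q) :
    IsBracketVec n (fun i => bv q i.val) := by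
  obtain ⟨h1, h2⟩ := hq
  constructor
  · intro i
    show bv q i.val ≤ n - i.val
    have := h1 i.val (by omega)
    have hi := i.isLt
    omega
  · intro i j hj1 hj2 h
    replace hj2 : j ≤ bv q i.val := hj2
    show j + bv q (i.val + j) ≤ bv q i.val
    have := h2 i.val (i.val + j) (by omega) (by omega)
    omega

/-- bracket vectors correspond to Q-lists of length n+1 -/
def equivQ : {a : Fin n → ℕ // IsBracketVec n a} ≃
    {q : List ℕ // q.length = n + 1 ∧ IsQ q} where
  toFun a := ⟨bvList n a.val, bvList_length n a.val, isQ_bvList n a.prop⟩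
  invFun q := ⟨fun i => bv q.val i.val, isBracketVec_of_isQ n q.prop.1 q.prop.2⟩
  left_inv a := by
    ext i
    exact bv_bvList_lt n a.val i.isLt
  right_inv q := by
    obtain ⟨q, hlen, hQ⟩ := q
    ext1
    apply List.ext_getElem
    · rw [bvList_length, hlen]
    · intro i hi1 hi2
      rw [hlen] at hi2
      rcases Nat.lt_or_ge i n with h | h
      · rw [← bv_eq_getElem hi1, ← bv_eq_getElem (by omega), bv_bvList_lt n _ h]
      · have hz : bv q i = 0 := by
          have := hQ.1 i (by omega)
          omega
        rw [← bv_eq_getElem hi1, ← bv_eq_getElem (by omega), bv_bvList_ge n _ (by omega), hz]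

/-- Q-lists of length m correspond to trees with m nodes -/
def equivTree (m : ℕ) : {q : List ℕ // q.length = m ∧ IsQ q} ≃
    {t : Tree Unit // t.numNodes = m} where
  toFun q := ⟨ofVec q.val, by
    rw [← length_toVec, toVec_ofVec q.val q.prop.2, q.prop.1]⟩
  invFun t := ⟨toVec t.val, by rw [length_toVec, t.prop], isQ_toVec t.val⟩
  left_inv q := Subtype.ext (toVec_ofVec q.val q.prop.2)
  right_inv t := Subtype.ext (ofVec_toVec t.val)

end Equivs

/-- the number of bracket vectors of length `n` is the Catalan number
`C_{n+1} = binom(2n+2, n+1)/(n+2)`. -/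
theorem stmt14 (n : ℕ) :
    Nat.card {a : Fin n → ℕ // IsBracketVec n a} = (2 * n + 2).choose (n + 1) / (n + 2) := by
  have e := (equivQ n).trans (equivTree (n + 1))
  rw [Nat.card_congr e]
  have : {t : Tree Unit // t.numNodes = n + 1} ≃ (treesOfNumNodesEq (n + 1) : Finset (Tree Unit)) :=
    (Equiv.subtypeEquivRight (fun t => (BinaryTree.mem_treesOfNumNodesEq).symm))
  rw [Nat.card_congr this, Nat.card_eq_finsetCard, BinaryTree.treesOfNumNodesEq_card_eq_catalan,
    catalan_eq_centralBinom_div, Nat.centralBinom]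
  congr 2
end
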